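/- arXiv:1702.08151 — 2 statements merged into one kernel-verified Lean document; each statement's English description precedes it below -/
import Mathlib

section
/- Let G be a finite simple graph with no independent set of three vertices (i.e., G is 3K₁-free). If the clique number of G equals 4 and the maximum degree Δ(G) is at least 7, then the chromatic number of G is at most Δ(G) − 1. -/
open Finset Function

section BKAux
variable {V : Type*} [Fintype V] [DecidableEq V] (G : SimpleGraph V) [DecidableRel G.Adj]

/-- A "good" function: an involution pairing non-adjacent vertices
(i.e. a matching in the complement graph, plus fixed points). -/
def GoodInv (f : V → V) : Prop := Involutive f ∧ ∀ v, f v ≠ v → ¬ G.Adj v (f v)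

/-- The set of non-fixed points of `f`. -/
def movSet (f : V → V) : Finset V := univ.filter (fun v => f v ≠ v)

lemma exists_max_goodInv :
    ∃ f, GoodInv G f ∧ ∀ g, GoodInv G g → (movSet g).card ≤ (movSet f).card := by
  classical
  obtain ⟨f, hf, hmax⟩ := Finset.exists_max_image (univ.filter fun f => GoodInv G f)
    (fun f => (movSet f).card) ⟨id, mem_filter.mpr ⟨mem_univ _, fun x => rfl, fun v h => absurd rfl h⟩⟩
  exact ⟨f, (mem_filter.mp hf).2, fun g hg => hmax g (mem_filter.mpr ⟨mem_univ _, hg⟩)⟩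

lemma aug_master (f g : V → V) (hf : GoodInv G f)
    (hmax : ∀ g', GoodInv G g' → (movSet g').card ≤ (movSet f).card)
    (hg : GoodInv G g) (hinv : ∀ v, g v ≠ v → g (f v) ≠ f v) :
    ∀ v, g v ≠ v → f v ≠ v := by
  by_contra hcon
  push_neg at hcon
  obtain ⟨u, hu1, hu2⟩ := hcon
  have hinv' : ∀ v, g (f v) ≠ f v → g v ≠ v := by
    intro v hv
    have h2 := hinv (f v) hv
    rwa [hf.1 v] at h2
  set f' := fun v => if g v = v then f v else g v with hf'def
  have hf'inv : Involutive f' := by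
    intro v
    by_cases hv : g v = v
    · have h2 : g (f v) = f v := by
        by_contra hc
        exact absurd hv (hinv' v hc)
      simp only [hf'def, hv, if_pos, h2, if_pos]
      exact hf.1 v
    · have h2 : g (g v) = v := hg.1 v
      have h3 : ¬ (g (g v) = g v) := by rw [h2]; exact fun h => hv h.symm
      simp only [hf'def, if_neg hv, if_neg h3]
      exact h2
  have hf'good : GoodInv G f' := by
    refine ⟨hf'inv, fun v hv => ?_⟩
    by_cases h : g v = v
    · have h1 : f' v = f v := by simp [hf'def, h]
      rw [h1] at hv ⊢; exact hf.2 v hv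
    · have h1 : f' v = g v := by simp [hf'def, h]
      rw [h1]; exact hg.2 v h
  have hsub : movSet f ⊆ movSet f' := by
    intro v hv
    simp only [movSet, mem_filter, mem_univ, true_and] at hv ⊢
    by_cases h : g v = v
    · simpa [hf'def, h] using hv
    · simpa [hf'def, h] using h
  have hu' : u ∈ movSet f' := by
    simp only [movSet, mem_filter, mem_univ, true_and]
    simpa [hf'def, hu1] using hu1
  have hunot : u ∉ movSet f := by simp [movSet, hu2]
  have hlt : (movSet f).card < (movSet f').card :=
    Finset.card_lt_card ⟨hsub, fun h => hunot (h hu')⟩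
  exact absurd (hmax f' hf'good) (not_le.mpr hlt)

def sw1 (u w : V) : V → V := fun v => if v = u then w else if v = w then u else v

lemma aug1 (f : V → V) (hf : GoodInv G f)
    (hmax : ∀ g', GoodInv G g' → (movSet g').card ≤ (movSet f).card)
    (u w : V) (hne : u ≠ w) (hnadj : ¬ G.Adj u w) (hu : f u = u) (hw : f w = w) : False := by
  have e1 : sw1 u w u = w := by simp [sw1]
  have e2 : sw1 u w w = u := by simp [sw1, hne.symm]
  have eo : ∀ v, v ≠ u → v ≠ w → sw1 u w v = v := by intro v h1 h2; simp [sw1, h1, h2]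
  have hg : GoodInv G (sw1 u w) := by
    constructor
    · intro v
      by_cases h1 : v = u
      · subst h1; rw [e1, e2]
      by_cases h2 : v = w
      · subst h2; rw [e2, e1]
      · rw [eo v h1 h2, eo v h1 h2]
    · intro v hv
      by_cases h1 : v = u
      · subst h1; rw [e1]; exact hnadj
      by_cases h2 : v = w
      · subst h2; rw [e2]; exact fun h => hnadj h.symm
      · rw [eo v h1 h2] at hv; exact absurd rfl hv
  have hinv : ∀ v, sw1 u w v ≠ v → sw1 u w (f v) ≠ f v := by
    intro v hv
    by_cases h1 : v = u
    · subst h1; rw [hu, e1]; exact hne.symm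
    by_cases h2 : v = w
    · subst h2; rw [hw, e2]; exact hne
    · rw [eo v h1 h2] at hv; exact absurd rfl hv
  have := aug_master G f (sw1 u w) hf hmax hg hinv u (by rw [e1]; exact hne.symm)
  exact this hu

def sw2 (u1 a u2 b : V) : V → V := fun v =>
  if v = u1 then a else if v = a then u1 else if v = u2 then b else if v = b then u2 else v

/-- augment along `u1 – a (=) b – u2`. -/
lemma aug2 (f : V → V) (hf : GoodInv G f)
    (hmax : ∀ g', GoodInv G g' → (movSet g').card ≤ (movSet f).card)
    (u1 u2 a b : V) (hu1 : f u1 = u1) (hu2 : f u2 = u2) (hab : f a = b)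
    (hab' : a ≠ b) (hu12 : u1 ≠ u2)
    (hn1 : ¬ G.Adj u1 a) (hn2 : ¬ G.Adj u2 b) : False := by
  have hba : f b = a := by rw [← hab, hf.1]
  have d1 : u1 ≠ a := by
    intro h; have h2 := hab; rw [← h, hu1] at h2; exact hab' (by rw [← h]; exact h2)
  have d2 : u1 ≠ b := by
    intro h; have h2 := hba; rw [← h, hu1] at h2; exact hab'.symm (by rw [← h]; exact h2)
  have d3 : u2 ≠ a := by
    intro h; have h2 := hab; rw [← h, hu2] at h2; exact hab' (by rw [← h]; exact h2)
  have d4 : u2 ≠ b := by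
    intro h; have h2 := hba; rw [← h, hu2] at h2; exact hab'.symm (by rw [← h]; exact h2)
  set g := sw2 u1 a u2 b with hg
  have e1 : g u1 = a := by simp [hg, sw2]
  have e2 : g a = u1 := by simp [hg, sw2, d1.symm]
  have e3 : g u2 = b := by simp [hg, sw2, hu12.symm, d3]
  have e4 : g b = u2 := by simp [hg, sw2, d2.symm, hab'.symm, d4.symm]
  have eo : ∀ v, v ≠ u1 → v ≠ a → v ≠ u2 → v ≠ b → g v = v := by
    intro v h1 h2 h3 h4; simp [hg, sw2, h1, h2, h3, h4]
  have hgood : GoodInv G g := by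
    constructor
    · intro v
      by_cases h1 : v = u1
      · subst h1; rw [e1, e2]
      by_cases h2 : v = a
      · subst h2; rw [e2, e1]
      by_cases h3 : v = u2
      · subst h3; rw [e3, e4]
      by_cases h4 : v = b
      · subst h4; rw [e4, e3]
      · rw [eo v h1 h2 h3 h4, eo v h1 h2 h3 h4]
    · intro v hv
      by_cases h1 : v = u1
      · subst h1; rw [e1]; exact hn1
      by_cases h2 : v = a
      · subst h2; rw [e2]; exact fun h => hn1 h.symm
      by_cases h3 : v = u2
      · subst h3; rw [e3]; exact hn2
      by_cases h4 : v = b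
      · subst h4; rw [e4]; exact fun h => hn2 h.symm
      · rw [eo v h1 h2 h3 h4] at hv; exact absurd rfl hv
  have hinv : ∀ v, g v ≠ v → g (f v) ≠ f v := by
    intro v hv
    by_cases h1 : v = u1
    · subst h1; rw [hu1, e1]; exact d1.symm
    by_cases h2 : v = a
    · subst h2; rw [hab, e4]; exact d4
    by_cases h3 : v = u2
    · subst h3; rw [hu2, e3]; exact d4.symm
    by_cases h4 : v = b
    · subst h4; rw [hba, e2]; exact d1
    · rw [eo v h1 h2 h3 h4] at hv; exact absurd rfl hv
  exact aug_master G f g hf hmax hgood hinv u1 (by rw [e1]; exact d1.symm) hu1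

def sw3 (u1 a1 b1 b2 u2 a2 : V) : V → V := fun v =>
  if v = u1 then a1 else if v = a1 then u1 else
  if v = b1 then b2 else if v = b2 then b1 else
  if v = u2 then a2 else if v = a2 then u2 else v

/-- augment along `u1 – a1 (=) b1 – b2 (=) a2 – u2`. -/
lemma aug3 (f : V → V) (hf : GoodInv G f)
    (hmax : ∀ g', GoodInv G g' → (movSet g').card ≤ (movSet f).card)
    (u1 u2 a1 b1 a2 b2 : V) (hu1 : f u1 = u1) (hu2 : f u2 = u2)
    (hp1 : f a1 = b1) (hp2 : f a2 = b2)
    (e1 : a1 ≠ b1) (e2 : a2 ≠ b2) (hu12 : u1 ≠ u2)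
    (p1 : a1 ≠ a2) (p2 : a1 ≠ b2) (p3 : b1 ≠ a2) (p4 : b1 ≠ b2)
    (hn1 : ¬ G.Adj u1 a1) (hn2 : ¬ G.Adj b1 b2) (hn3 : ¬ G.Adj u2 a2) : False := by
  have hq1 : f b1 = a1 := by rw [← hp1, hf.1]
  have hq2 : f b2 = a2 := by rw [← hp2, hf.1]
  have d1 : u1 ≠ a1 := by
    intro h; have h2 := hp1; rw [← h, hu1] at h2; exact e1 (by rw [← h]; exact h2)
  have d2 : u1 ≠ b1 := by
    intro h; have h2 := hq1; rw [← h, hu1] at h2; exact e1.symm (by rw [← h]; exact h2)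
  have d3 : u1 ≠ a2 := by
    intro h; have h2 := hp2; rw [← h, hu1] at h2; exact e2 (by rw [← h]; exact h2)
  have d4 : u1 ≠ b2 := by
    intro h; have h2 := hq2; rw [← h, hu1] at h2; exact e2.symm (by rw [← h]; exact h2)
  have d5 : u2 ≠ a1 := by
    intro h; have h2 := hp1; rw [← h, hu2] at h2; exact e1 (by rw [← h]; exact h2)
  have d6 : u2 ≠ b1 := by
    intro h; have h2 := hq1; rw [← h, hu2] at h2; exact e1.symm (by rw [← h]; exact h2)
  have d7 : u2 ≠ a2 := by
    intro h; have h2 := hp2; rw [← h, hu2] at h2; exact e2 (by rw [← h]; exact h2)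
  have d8 : u2 ≠ b2 := by
    intro h; have h2 := hq2; rw [← h, hu2] at h2; exact e2.symm (by rw [← h]; exact h2)
  set g := sw3 u1 a1 b1 b2 u2 a2 with hg
  have g1 : g u1 = a1 := by simp [hg, sw3]
  have g2 : g a1 = u1 := by simp [hg, sw3, d1.symm]
  have g3 : g b1 = b2 := by simp [hg, sw3, d2.symm, e1.symm]
  have g4 : g b2 = b1 := by simp [hg, sw3, d4.symm, p2.symm, p4.symm]
  have g5 : g u2 = a2 := by simp [hg, sw3, hu12.symm, d5, d6, d8]
  have g6 : g a2 = u2 := by simp [hg, sw3, d3.symm, p1.symm, p3.symm, e2, d7.symm]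
  have eo : ∀ v, v ≠ u1 → v ≠ a1 → v ≠ b1 → v ≠ b2 → v ≠ u2 → v ≠ a2 → g v = v := by
    intro v h1 h2 h3 h4 h5 h6; simp [hg, sw3, h1, h2, h3, h4, h5, h6]
  have hgood : GoodInv G g := by
    constructor
    · intro v
      by_cases h1 : v = u1
      · subst h1; rw [g1, g2]
      by_cases h2 : v = a1
      · subst h2; rw [g2, g1]
      by_cases h3 : v = b1
      · subst h3; rw [g3, g4]
      by_cases h4 : v = b2
      · subst h4; rw [g4, g3]
      by_cases h5 : v = u2
      · subst h5; rw [g5, g6]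
      by_cases h6 : v = a2
      · subst h6; rw [g6, g5]
      · rw [eo v h1 h2 h3 h4 h5 h6, eo v h1 h2 h3 h4 h5 h6]
    · intro v hv
      by_cases h1 : v = u1
      · subst h1; rw [g1]; exact hn1
      by_cases h2 : v = a1
      · subst h2; rw [g2]; exact fun h => hn1 h.symm
      by_cases h3 : v = b1
      · subst h3; rw [g3]; exact hn2
      by_cases h4 : v = b2
      · subst h4; rw [g4]; exact fun h => hn2 h.symm
      by_cases h5 : v = u2
      · subst h5; rw [g5]; exact hn3
      by_cases h6 : v = a2
      · subst h6; rw [g6]; exact fun h => hn3 h.symm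
      · rw [eo v h1 h2 h3 h4 h5 h6] at hv; exact absurd rfl hv
  have hinv : ∀ v, g v ≠ v → g (f v) ≠ f v := by
    intro v hv
    by_cases h1 : v = u1
    · subst h1; rw [hu1, g1]; exact d1.symm
    by_cases h2 : v = a1
    · subst h2; rw [hp1, g3]; exact p4.symm
    by_cases h3 : v = b1
    · subst h3; rw [hq1, g2]; exact d1
    by_cases h4 : v = b2
    · subst h4; rw [hq2, g6]; exact d7
    by_cases h5 : v = u2
    · subst h5; rw [hu2, g5]; exact d7.symm
    by_cases h6 : v = a2
    · subst h6; rw [hp2, g4]; exact p4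
    · rw [eo v h1 h2 h3 h4 h5 h6] at hv; exact absurd rfl hv
  exact aug_master G f g hf hmax hgood hinv u1 (by rw [g1]; exact d1.symm) hu1

lemma gc3_false (h3 : Gᶜ.CliqueFree 3) {a b c : V} (hab : a ≠ b) (hac : a ≠ c) (hbc : b ≠ c)
    (n1 : ¬G.Adj a b) (n2 : ¬G.Adj a c) (n3 : ¬G.Adj b c) : False := by
  have n1' : ¬G.Adj b a := fun h => n1 h.symm
  have n2' : ¬G.Adj c a := fun h => n2 h.symm
  have n3' : ¬G.Adj c b := fun h => n3 h.symm
  apply h3 {a, b, c}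
  constructor
  · intro x hx y hy hxy
    simp only [coe_insert, Set.mem_insert_iff, coe_singleton, Set.mem_singleton_iff] at hx hy
    rw [SimpleGraph.compl_adj]
    rcases hx with rfl | rfl | rfl <;> rcases hy with rfl | rfl | rfl <;>
      first
      | exact absurd rfl hxy
      | exact ⟨hxy, by assumption⟩
  · rw [card_eq_three]
    exact ⟨a, b, c, hab, hac, hbc, rfl⟩

lemma k5_false (hω : G.cliqueNum = 4) {a b c d e : V}
    (hab : a ≠ b) (hac : a ≠ c) (had : a ≠ d) (hae : a ≠ e)
    (hbc : b ≠ c) (hbd : b ≠ d) (hbe : b ≠ e)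
    (hcd : c ≠ d) (hce : c ≠ e) (hde : d ≠ e)
    (Aab : G.Adj a b) (Aac : G.Adj a c) (Aad : G.Adj a d) (Aae : G.Adj a e)
    (Abc : G.Adj b c) (Abd : G.Adj b d) (Abe : G.Adj b e)
    (Acd : G.Adj c d) (Ace : G.Adj c e) (Ade : G.Adj d e) : False := by
  have Aba := Aab.symm; have Aca := Aac.symm; have Ada := Aad.symm; have Aea := Aae.symm
  have Acb := Abc.symm; have Adb := Abd.symm; have Aeb := Abe.symm
  have Adc := Acd.symm; have Aec := Ace.symm; have Aed := Ade.symm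
  have hcl : G.IsClique ({a, b, c, d, e} : Finset V) := by
    intro x hx y hy hxy
    simp only [coe_insert, Set.mem_insert_iff, coe_singleton, Set.mem_singleton_iff] at hx hy
    rcases hx with rfl | rfl | rfl | rfl | rfl <;> rcases hy with rfl | rfl | rfl | rfl | rfl <;>
      first
      | exact absurd rfl hxy
      | assumption
  have hcard : ({a, b, c, d, e} : Finset V).card = 5 := by
    rw [card_insert_of_notMem (by simp [hab, hac, had, hae]),
      card_insert_of_notMem (by simp [hbc, hbd, hbe]),
      card_insert_of_notMem (by simp [hcd, hce]),
      card_insert_of_notMem (by simp [hde]), card_singleton]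
  have h5 : ({a, b, c, d, e} : Finset V).card ≤ G.cliqueNum :=
    SimpleGraph.IsClique.card_le_cliqueNum (tc := hcl)
  rw [hcard, hω] at h5
  omega

lemma compl_deg_bound (v : V) :
    Fintype.card V - 1 - G.maxDegree ≤ (univ.filter (fun w => w ≠ v ∧ ¬ G.Adj v w)).card := by
  have h1 : (univ.filter (fun w => w ≠ v ∧ ¬ G.Adj v w)) = (insert v (G.neighborFinset v))ᶜ := by
    ext w
    simp only [mem_filter, mem_univ, true_and, mem_compl, mem_insert,
      SimpleGraph.mem_neighborFinset, not_or]
  rw [h1, card_compl]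
  have h2 : (insert v (G.neighborFinset v)).card = G.degree v + 1 := by
    rw [card_insert_of_notMem (by simp)]
    rfl
  rw [h2]
  have h3 := G.degree_le_maxDegree v
  have h4 := G.degree_lt_card_verts v
  omega

end BKAux

/-- If a finite simple graph `G` is `3K₁`-free (i.e. its complement is triangle-free,
equivalently `G` has no independent set of three vertices), its clique number is `4`,
and its maximum degree is at least `7`, then `χ(G) ≤ Δ(G) - 1`. -/
theorem stmt_0 {V : Type*} [Fintype V] (G : SimpleGraph V) [DecidableRel G.Adj]
    (h3K1 : Gᶜ.CliqueFree 3) (hω : G.cliqueNum = 4) (hΔ : 7 ≤ G.maxDegree) :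
    G.chromaticNumber ≤ (G.maxDegree - 1 : ℕ) := by
  classical
  letI : LinearOrder V := LinearOrder.lift' (Fintype.equivFin V) (Equiv.injective _)
  have hne : Nonempty V := by
    by_contra h
    rw [not_nonempty_iff] at h
    have h0 : G.maxDegree ≤ 0 := G.maxDegree_le_of_forall_degree_le 0 (fun v => (h.false v).elim)
    omega
  obtain ⟨f, hfg, hfmax⟩ := exists_max_goodInv G
  set n := Fintype.card V with hn
  set D := G.maxDegree with hD
  have hDn : D < n := by
    obtain ⟨v, hv⟩ := G.exists_maximal_degree_vertex
    rw [hD, hv]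
    exact G.degree_lt_card_verts v
  set U : Finset V := univ.filter (fun v => f v = v) with hU
  set T : Finset V := univ.filter (fun v : V => v < f v) with hT
  set T' : Finset V := univ.filter (fun v : V => f v < v) with hT'
  set S : Finset V := univ.filter (fun v : V => v ≤ f v) with hS
  have hTT' : T.card = T'.card := by
    apply Finset.card_bij' (fun a _ => f a) (fun b _ => f b)
    · intro a ha
      simp only [hT, mem_filter, mem_univ, true_and] at ha
      simp only [hT', mem_filter, mem_univ, true_and, hfg.1 a]
      exact ha
    · intro b hb
      simp only [hT', mem_filter, mem_univ, true_and] at hb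
      simp only [hT, mem_filter, mem_univ, true_and, hfg.1 b]
      exact hb
    · intro a _; exact hfg.1 a
    · intro b _; exact hfg.1 b
  have hSn : S.card + T'.card = n := by
    have h := card_filter_add_card_filter_not (s := (univ : Finset V))
      (p := fun v : V => v ≤ f v)
    rw [Finset.card_univ] at h
    have h2 : T' = filter (fun v : V => ¬ v ≤ f v) univ := by
      ext v
      simp [hT', not_le]
    rw [hS, h2, hn]
    exact h
  have hST : S = U ∪ T := by
    ext v
    simp only [hS, hU, hT, mem_filter, mem_univ, true_and, mem_union]
    constructor
    · intro h
      rcases lt_or_eq_of_le h with h' | h'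
      · exact Or.inr h'
      · exact Or.inl h'.symm
    · rintro (h | h)
      · exact le_of_eq h.symm
      · exact le_of_lt h
  have hUT : Disjoint U T := by
    rw [Finset.disjoint_left]
    intro a ha hb
    simp only [hU, mem_filter] at ha
    simp only [hT, mem_filter] at hb
    rw [ha.2] at hb
    exact lt_irrefl a hb.2
  have hScard : S.card = U.card + T.card := by rw [hST, card_union_of_disjoint hUT]
  -- basic facts about U and T
  have hUfix : ∀ u ∈ U, f u = u := by
    intro u hu; rw [hU, mem_filter] at hu; exact hu.2
  have hTlt : ∀ x ∈ T, x < f x := by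
    intro x hx; rw [hT, mem_filter] at hx; exact hx.2
  have hTne : ∀ x ∈ T, f x ≠ x := fun x hx => (hTlt x hx).ne'
  have hTnadj : ∀ x ∈ T, ¬ G.Adj x (f x) := fun x hx => hfg.2 x (hTne x hx)
  have hTU : ∀ x ∈ T, ∀ u ∈ U, x ≠ u ∧ f x ≠ u := by
    intro x hx u hu
    constructor
    · rintro rfl
      exact hTne x hx (hUfix x hu)
    · intro h
      have h2 : f (f x) = f x := by rw [h, hUfix u hu]
      rw [hfg.1 x] at h2
      exact hTne x hx h2.symm
  -- the key combinatorial claim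
  have hkey : n - D + 1 ≤ T.card := by
    by_contra hcon
    push_neg at hcon
    -- U is a clique in G
    have hUadj : ∀ u ∈ U, ∀ w ∈ U, u ≠ w → G.Adj u w := by
      intro u hu w hw hnew
      by_contra hnadj
      exact aug1 G f hfg hfmax u w hnew hnadj (hUfix u hu) (hUfix w hw)
    have hUcl : U.card ≤ 4 := by
      have hcl : G.IsClique (U : Set V) := by
        intro x hx y hy hxy
        exact hUadj x (mem_coe.mp hx) y (mem_coe.mp hy) hxy
      have h := SimpleGraph.IsClique.card_le_cliqueNum (tc := hcl)
      rw [hω] at h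
      exact h
    -- the min-degree of the complement is at most 4
    have hk4 : n - 1 - D ≤ 4 := by
      obtain ⟨v⟩ := hne
      have h1 : n - 1 - D ≤ (univ.filter (fun w => w ≠ v ∧ ¬ G.Adj v w)).card := by
        have := compl_deg_bound G v
        rwa [← hn, ← hD] at this
      have hcl : G.IsClique ((univ.filter (fun w => w ≠ v ∧ ¬ G.Adj v w)) : Set V) := by
        intro w1 h1' w2 h2' hne12
        rw [mem_coe, mem_filter] at h1' h2'
        by_contra hn12
        exact gc3_false G h3K1 (Ne.symm h1'.2.1) (Ne.symm h2'.2.1) hne12 h1'.2.2 h2'.2.2 hn12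
      have h2 := SimpleGraph.IsClique.card_le_cliqueNum (tc := hcl)
      rw [hω] at h2
      omega
    -- helpers about pairs
    have hpmin : ∀ x ∈ T, ∀ p, (p = x ∨ p = f x) → min p (f p) = x := by
      intro x hx p hp
      rcases hp with h | h
      · rw [h]
        exact min_eq_left (le_of_lt (hTlt x hx))
      · rw [h, hfg.1 x]
        exact min_eq_right (le_of_lt (hTlt x hx))
    have hpne : ∀ x ∈ T, ∀ y ∈ T, x ≠ y → ∀ p q, (p = x ∨ p = f x) → (q = y ∨ q = f y) →
        p ≠ q := by
      intro x hx y hy hxy p q hp hq h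
      apply hxy
      rw [← hpmin x hx p hp, ← hpmin y hy q hq, h]
    have hpmoved : ∀ x ∈ T, ∀ p, (p = x ∨ p = f x) → f p ≠ p := by
      intro x hx p hp
      rcases hp with h | h
      · rw [h]; exact hTne x hx
      · rw [h, hfg.1 x]
        exact fun h' => hTne x hx h'.symm
    have hUnep : ∀ x ∈ T, ∀ p, (p = x ∨ p = f x) → ∀ u ∈ U, u ≠ p := by
      intro x hx p hp u hu
      rcases hp with h | h
      · rw [h]; exact fun hh => (hTU x hx u hu).1 hh.symm
      · rw [h]; exact fun hh => (hTU x hx u hu).2 hh.symm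
    have hpmem : ∀ v p : V, min p (f p) = min v (f v) → p = v ∨ p = f v := by
      intro v p h
      rcases min_cases p (f p) with ⟨h1, _⟩ | ⟨h1, _⟩ <;>
        rcases min_cases v (f v) with ⟨h2, _⟩ | ⟨h2, _⟩
      · left; rw [← h1, h, h2]
      · right; rw [← h1, h, h2]
      · right
        have hv : f p = v := by rw [← h1, h, h2]
        rw [← hv, hfg.1 p]
      · left
        have hv : f p = f v := by rw [← h1, h, h2]
        exact hfg.1.injective hv
    -- representatives: each pair has an endpoint adjacent to all of U
    have hrep : ∀ x ∈ T, ∃ p, (p = x ∨ p = f x) ∧ ∀ u ∈ U, G.Adj u p := by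
      intro x hx
      by_cases hex : ∃ u ∈ U, ¬ G.Adj u x
      · obtain ⟨u1, hu1U, hu1n⟩ := hex
        refine ⟨f x, Or.inr rfl, ?_⟩
        intro u huU
        by_contra hnn
        by_cases hequ : u = u1
        · subst hequ
          exact gc3_false G h3K1 (Ne.symm (hTU x hx u huU).1) (Ne.symm (hTU x hx u huU).2)
            (hTlt x hx).ne hu1n hnn (hTnadj x hx)
        · exact aug2 G f hfg hfmax u1 u x (f x) (hUfix u1 hu1U) (hUfix u huU) rfl
            (hTlt x hx).ne (Ne.symm hequ) hu1n hnn
      · push_neg at hex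
        exact ⟨x, Or.inl rfl, hex⟩
    -- case analysis
    rcases (by omega : (3 ≤ U.card ∧ 3 ≤ T.card) ∨ (U.card = 2 ∧ n - 1 - D = 4 ∧ T.card = 5))
      with ⟨hU3, hT3⟩ | ⟨hU2, hk, hT5⟩
    · -- scenario (i): at least 3 unmatched vertices
      obtain ⟨U3, hU3sub, hU3card⟩ := Finset.exists_subset_card_eq hU3
      obtain ⟨u1, u2, u3, h12, h13, h23, hU3eq⟩ := Finset.card_eq_three.mp hU3card
      have hu1U : u1 ∈ U := hU3sub (by rw [hU3eq]; simp)
      have hu2U : u2 ∈ U := hU3sub (by rw [hU3eq]; simp)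
      have hu3U : u3 ∈ U := hU3sub (by rw [hU3eq]; simp)
      obtain ⟨T3, hT3sub, hT3card⟩ := Finset.exists_subset_card_eq hT3
      obtain ⟨x, y, z, hxy, hxz, hyz, hT3eq⟩ := Finset.card_eq_three.mp hT3card
      have hxT : x ∈ T := hT3sub (by rw [hT3eq]; simp)
      have hyT : y ∈ T := hT3sub (by rw [hT3eq]; simp)
      have hzT : z ∈ T := hT3sub (by rw [hT3eq]; simp)
      obtain ⟨px, hpx, hpxadj⟩ := hrep x hxT
      obtain ⟨py, hpy, hpyadj⟩ := hrep y hyT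
      obtain ⟨pz, hpz, hpzadj⟩ := hrep z hzT
      have dxy : px ≠ py := hpne x hxT y hyT hxy px py hpx hpy
      have dxz : px ≠ pz := hpne x hxT z hzT hxz px pz hpx hpz
      have dyz : py ≠ pz := hpne y hyT z hzT hyz py pz hpy hpz
      by_cases haxy : G.Adj px py
      · exact k5_false G hω h12 h13 (hUnep x hxT px hpx u1 hu1U) (hUnep y hyT py hpy u1 hu1U)
          h23 (hUnep x hxT px hpx u2 hu2U) (hUnep y hyT py hpy u2 hu2U)
          (hUnep x hxT px hpx u3 hu3U) (hUnep y hyT py hpy u3 hu3U) dxy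
          (hUadj u1 hu1U u2 hu2U h12) (hUadj u1 hu1U u3 hu3U h13)
          (hpxadj u1 hu1U) (hpyadj u1 hu1U)
          (hUadj u2 hu2U u3 hu3U h23) (hpxadj u2 hu2U) (hpyadj u2 hu2U)
          (hpxadj u3 hu3U) (hpyadj u3 hu3U) haxy
      by_cases haxz : G.Adj px pz
      · exact k5_false G hω h12 h13 (hUnep x hxT px hpx u1 hu1U) (hUnep z hzT pz hpz u1 hu1U)
          h23 (hUnep x hxT px hpx u2 hu2U) (hUnep z hzT pz hpz u2 hu2U)
          (hUnep x hxT px hpx u3 hu3U) (hUnep z hzT pz hpz u3 hu3U) dxz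
          (hUadj u1 hu1U u2 hu2U h12) (hUadj u1 hu1U u3 hu3U h13)
          (hpxadj u1 hu1U) (hpzadj u1 hu1U)
          (hUadj u2 hu2U u3 hu3U h23) (hpxadj u2 hu2U) (hpzadj u2 hu2U)
          (hpxadj u3 hu3U) (hpzadj u3 hu3U) haxz
      by_cases hayz : G.Adj py pz
      · exact k5_false G hω h12 h13 (hUnep y hyT py hpy u1 hu1U) (hUnep z hzT pz hpz u1 hu1U)
          h23 (hUnep y hyT py hpy u2 hu2U) (hUnep z hzT pz hpz u2 hu2U)
          (hUnep y hyT py hpy u3 hu3U) (hUnep z hzT pz hpz u3 hu3U) dyz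
          (hUadj u1 hu1U u2 hu2U h12) (hUadj u1 hu1U u3 hu3U h13)
          (hpyadj u1 hu1U) (hpzadj u1 hu1U)
          (hUadj u2 hu2U u3 hu3U h23) (hpyadj u2 hu2U) (hpzadj u2 hu2U)
          (hpyadj u3 hu3U) (hpzadj u3 hu3U) hayz
      · exact gc3_false G h3K1 dxy dxz dyz haxy haxz hayz
    · -- scenario (ii): exactly 2 unmatched vertices, k = 4, 5 pairs
      obtain ⟨u1, u2, h12, hUeq⟩ := Finset.card_eq_two.mp hU2
      have hu1U : u1 ∈ U := by rw [hUeq]; simp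
      have hu2U : u2 ∈ U := by rw [hUeq]; simp
      have hA12 : G.Adj u1 u2 := hUadj u1 hu1U u2 hu2U h12
      -- each of u1, u2 "touches" at least 4 pairs
      have hdegN : ∀ u ∈ U, 4 ≤ (T.filter (fun x => ¬ G.Adj u x ∨ ¬ G.Adj u (f x))).card := by
        intro u hu
        have h4 : 4 ≤ (univ.filter (fun w => w ≠ u ∧ ¬ G.Adj u w)).card := by
          have := compl_deg_bound G u
          rw [← hn, ← hD] at this
          omega
        refine le_trans h4 (Finset.card_le_card_of_injOn (fun w => min w (f w)) ?_ ?_)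
        · intro w hw
          rw [mem_coe, mem_filter] at hw
          obtain ⟨-, hwu, hwn⟩ := hw
          have hwmoved : f w ≠ w := by
            intro hfix
            have hwU : w ∈ U := by rw [hU, mem_filter]; exact ⟨mem_univ w, hfix⟩
            exact hwn (hUadj u hu w hwU (Ne.symm hwu))
          dsimp only
          rw [mem_coe]
          rcases lt_or_gt_of_ne (Ne.symm hwmoved) with hlt | hgt
          · rw [min_eq_left (le_of_lt hlt), mem_filter]
            refine ⟨?_, Or.inl hwn⟩
            rw [hT, mem_filter]
            exact ⟨mem_univ w, hlt⟩
          · rw [min_eq_right (le_of_lt hgt), mem_filter]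
            constructor
            · rw [hT, mem_filter]
              refine ⟨mem_univ _, ?_⟩
              rw [hfg.1 w]
              exact hgt
            · right
              rw [hfg.1 w]
              exact hwn
        · intro w hw w' hw' heq
          rw [mem_coe, mem_filter] at hw hw'
          by_contra hne'
          rcases hpmem w' w heq with h | h
          · exact hne' h
          · have hfw' : f w' ≠ w' := by
              rw [← h]
              exact hne'
            exact gc3_false G h3K1 (Ne.symm hw'.2.1) (by rw [← h]; exact Ne.symm hw.2.1)
              (Ne.symm hfw') hw'.2.2 (by rw [← h]; exact hw.2.2) (hfg.2 w' hfw')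
      have h4N1 := hdegN u1 hu1U
      have h4N2 := hdegN u2 hu2U
      set N1 : Finset V := T.filter (fun x => ¬ G.Adj u1 x ∨ ¬ G.Adj u1 (f x)) with hN1
      set N2 : Finset V := T.filter (fun x => ¬ G.Adj u2 x ∨ ¬ G.Adj u2 (f x)) with hN2
      have hint : 3 ≤ (N1 ∩ N2).card := by
        have h1 := Finset.card_inter_add_card_union N1 N2
        have h2 : (N1 ∪ N2).card ≤ 5 := by
          rw [← hT5]
          exact card_le_card (union_subset (by rw [hN1]; exact filter_subset _ _)
            (by rw [hN2]; exact filter_subset _ _))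
        omega
      obtain ⟨I, hIsub, hIcard⟩ := Finset.exists_subset_card_eq hint
      obtain ⟨x, y, z, hxy, hxz, hyz, hIeq⟩ := Finset.card_eq_three.mp hIcard
      have hxI : x ∈ N1 ∩ N2 := hIsub (by rw [hIeq]; simp)
      have hyI : y ∈ N1 ∩ N2 := hIsub (by rw [hIeq]; simp)
      have hzI : z ∈ N1 ∩ N2 := hIsub (by rw [hIeq]; simp)
      -- the key per-pair structure
      have hkeyw : ∀ w ∈ N1 ∩ N2, ∃ a, (a = w ∨ a = f w) ∧ ¬ G.Adj u1 a ∧ ¬ G.Adj u2 a ∧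
          G.Adj u1 (f a) ∧ G.Adj u2 (f a) := by
        intro w hw
        rw [mem_inter] at hw
        have hwN1 := hw.1
        have hwN2 := hw.2
        rw [hN1, mem_filter] at hwN1
        rw [hN2, mem_filter] at hwN2
        have hwT : w ∈ T := hwN1.1
        have hd1 := hwN1.2
        have hd2 := hwN2.2
        have hwne : w ≠ f w := (hTlt w hwT).ne
        have hnadjw := hTnadj w hwT
        have hu1w : u1 ≠ w := Ne.symm (hTU w hwT u1 hu1U).1
        have hu1fw : u1 ≠ f w := Ne.symm (hTU w hwT u1 hu1U).2
        have hu2w : u2 ≠ w := Ne.symm (hTU w hwT u2 hu2U).1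
        have hu2fw : u2 ≠ f w := Ne.symm (hTU w hwT u2 hu2U).2
        rcases hd1 with h1 | h1 <;> rcases hd2 with h2 | h2
        · refine ⟨w, Or.inl rfl, h1, h2, ?_, ?_⟩
          · by_contra hnn
            exact gc3_false G h3K1 hu1w hu1fw hwne h1 hnn hnadjw
          · by_contra hnn
            exact gc3_false G h3K1 hu2w hu2fw hwne h2 hnn hnadjw
        · exact (aug2 G f hfg hfmax u1 u2 w (f w) (hUfix u1 hu1U) (hUfix u2 hu2U) rfl hwne
            h12 h1 h2).elim
        · exact (aug2 G f hfg hfmax u2 u1 w (f w) (hUfix u2 hu2U) (hUfix u1 hu1U) rfl hwne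
            h12.symm h2 h1).elim
        · refine ⟨f w, Or.inr rfl, h1, h2, ?_, ?_⟩
          · rw [hfg.1 w]
            by_contra hnn
            exact gc3_false G h3K1 hu1w hu1fw hwne hnn h1 hnadjw
          · rw [hfg.1 w]
            by_contra hnn
            exact gc3_false G h3K1 hu2w hu2fw hwne hnn h2 hnadjw
      have hxT : x ∈ T := by
        have := (mem_inter.mp hxI).1
        rw [hN1, mem_filter] at this
        exact this.1
      have hyT : y ∈ T := by
        have := (mem_inter.mp hyI).1
        rw [hN1, mem_filter] at this
        exact this.1
      have hzT : z ∈ T := by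
        have := (mem_inter.mp hzI).1
        rw [hN1, mem_filter] at this
        exact this.1
      obtain ⟨ax, hax, hax1, hax2, hbx1, hbx2⟩ := hkeyw x hxI
      obtain ⟨ay, hay, hay1, hay2, hby1, hby2⟩ := hkeyw y hyI
      obtain ⟨az, haz, haz1, haz2, hbz1, hbz2⟩ := hkeyw z hzI
      -- membership of partners
      have hbx : f ax = x ∨ f ax = f x := by
        rcases hax with h | h
        · right; rw [h]
        · left; rw [h, hfg.1 x]
      have hby : f ay = y ∨ f ay = f y := by
        rcases hay with h | h
        · right; rw [h]
        · left; rw [h, hfg.1 y]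
      have hbz : f az = z ∨ f az = f z := by
        rcases haz with h | h
        · right; rw [h]
        · left; rw [h, hfg.1 z]
      -- reorder disjunctions to match `hpne` form
      have hax' : ax = x ∨ ax = f x := hax
      have hbx' : f ax = x ∨ f ax = f x := hbx
      -- distinctness
      have exx : ax ≠ f ax := fun h => hpmoved x hxT ax hax h.symm
      have eyy : ay ≠ f ay := fun h => hpmoved y hyT ay hay h.symm
      have ezz : az ≠ f az := fun h => hpmoved z hzT az haz h.symm
      by_cases hAxy : G.Adj (f ax) (f ay)
      · by_cases hAxz : G.Adj (f ax) (f az)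
        · by_cases hAyz : G.Adj (f ay) (f az)
          · -- five-clique u1 u2 (f ax) (f ay) (f az)
            exact k5_false G hω h12 (hUnep x hxT (f ax) hbx u1 hu1U)
              (hUnep y hyT (f ay) hby u1 hu1U) (hUnep z hzT (f az) hbz u1 hu1U)
              (hUnep x hxT (f ax) hbx u2 hu2U) (hUnep y hyT (f ay) hby u2 hu2U)
              (hUnep z hzT (f az) hbz u2 hu2U)
              (hpne x hxT y hyT hxy (f ax) (f ay) hbx hby)
              (hpne x hxT z hzT hxz (f ax) (f az) hbx hbz)
              (hpne y hyT z hzT hyz (f ay) (f az) hby hbz)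
              hA12 hbx1 hby1 hbz1 hbx2 hby2 hbz2 hAxy hAxz hAyz
          · -- augment along u1 - ay - f ay - f az - az - u2
            exact (aug3 G f hfg hfmax u1 u2 ay (f ay) az (f az) (hUfix u1 hu1U)
              (hUfix u2 hu2U) rfl rfl eyy ezz h12
              (hpne y hyT z hzT hyz ay az hay haz)
              (hpne y hyT z hzT hyz ay (f az) hay hbz)
              (hpne y hyT z hzT hyz (f ay) az hby haz)
              (hpne y hyT z hzT hyz (f ay) (f az) hby hbz)
              hay1 hAyz haz2).elim
        · exact (aug3 G f hfg hfmax u1 u2 ax (f ax) az (f az) (hUfix u1 hu1U)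
            (hUfix u2 hu2U) rfl rfl exx ezz h12
            (hpne x hxT z hzT hxz ax az hax haz)
            (hpne x hxT z hzT hxz ax (f az) hax hbz)
            (hpne x hxT z hzT hxz (f ax) az hbx haz)
            (hpne x hxT z hzT hxz (f ax) (f az) hbx hbz)
            hax1 hAxz haz2).elim
      · exact (aug3 G f hfg hfmax u1 u2 ax (f ax) ay (f ay) (hUfix u1 hu1U)
          (hUfix u2 hu2U) rfl rfl exx eyy h12
          (hpne x hxT y hyT hxy ax ay hax hay)
          (hpne x hxT y hyT hxy ax (f ay) hax hby)
          (hpne x hxT y hyT hxy (f ax) ay hbx hay)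
          (hpne x hxT y hyT hxy (f ax) (f ay) hbx hby)
          hax1 hAxy hay2).elim
  -- the coloring part
  have hmem : ∀ v, min v (f v) ∈ S := by
    intro v
    simp only [hS, mem_filter, mem_univ, true_and]
    rcases le_total v (f v) with h | h
    · rw [min_eq_left h]; exact h
    · rw [min_eq_right h, hfg.1 v]; exact h
  have hproper : ∀ {v w : V}, G.Adj v w →
      (⟨min v (f v), hmem v⟩ : {x // x ∈ S}) ≠ ⟨min w (f w), hmem w⟩ := by
    intro v w hadj heq
    rw [Subtype.mk.injEq] at heq
    have hvw : v ≠ w := hadj.ne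
    rcases min_cases v (f v) with ⟨h1, _⟩ | ⟨h1, _⟩ <;>
      rcases min_cases w (f w) with ⟨h2, _⟩ | ⟨h2, _⟩ <;> rw [h1, h2] at heq
    · exact hvw heq
    · have hw : f w ≠ w := by rw [← heq]; exact hvw
      exact hfg.2 w hw (by rw [heq] at hadj; exact hadj.symm)
    · have hv : f v ≠ v := by rw [heq]; exact fun h => hvw h.symm
      exact hfg.2 v hv (by rw [heq]; exact hadj)
    · exact hvw (hfg.1.injective heq)
  let C : G.Coloring {x // x ∈ S} := SimpleGraph.Coloring.mk _ hproper
  have hcol : G.Colorable S.card := by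
    have := C.colorable
    rwa [Fintype.card_coe] at this
  have hfinal : S.card ≤ D - 1 := by omega
  exact (hcol.mono hfinal).chromaticNumber_le
end

section
/- (Borodin–Kostochka conjecture for 3K₁-free graphs.) Let G be a finite simple graph with no independent set of three vertices (i.e., G is 3K₁-free). If the maximum degree Δ(G) is at least 9, then the chromatic number of G satisfies χ(G) ≤ max{ω(G), Δ(G) − 1}. -/
set_option linter.unusedSectionVars false

open Finset

section BK

variable {V : Type*} [Fintype V] [DecidableEq V] (G : SimpleGraph V)

/-- Two vertices are "H-adjacent" (adjacent in the complement). -/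
def Hadj (a b : V) : Prop := a ≠ b ∧ ¬ G.Adj a b

lemma Hadj.symm' {G : SimpleGraph V} {a b : V} (h : Hadj G a b) : Hadj G b a :=
  ⟨h.1.symm, fun h' => h.2 h'.symm⟩

/-- Complement triangle-free gives: no three pairwise H-adjacent vertices. -/
lemma tri {G : SimpleGraph V} (h3 : Gᶜ.CliqueFree 3) {x y z : V}
    (hxy : Hadj G x y) (hxz : Hadj G x z) (hyz : Hadj G y z) : False := by
  apply h3 {x, y, z}
  rw [SimpleGraph.is3Clique_triple_iff]
  exact ⟨⟨hxy.1, hxy.2⟩, ⟨hxz.1, hxz.2⟩, ⟨hyz.1, hyz.2⟩⟩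

/-- A pairing: a set of disjoint pairs of distinct, non-adjacent vertices. -/
def IsPairing (P : Finset (V × V)) : Prop :=
  (∀ p ∈ P, p.1 ≠ p.2 ∧ ¬ G.Adj p.1 p.2) ∧
  (∀ p ∈ P, ∀ q ∈ P, p ≠ q → p.1 ≠ q.1 ∧ p.1 ≠ q.2 ∧ p.2 ≠ q.1 ∧ p.2 ≠ q.2)

/-- Vertices covered by a pairing. -/
def cov (P : Finset (V × V)) : Finset V := P.image Prod.fst ∪ P.image Prod.snd

variable {G}

lemma mem_cov {P : Finset (V × V)} {x : V} :
    x ∈ cov P ↔ ∃ p ∈ P, x = p.1 ∨ x = p.2 := by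
  simp only [cov, mem_union, mem_image]
  constructor
  · rintro (⟨p, hp, rfl⟩ | ⟨p, hp, rfl⟩)
    · exact ⟨p, hp, Or.inl rfl⟩
    · exact ⟨p, hp, Or.inr rfl⟩
  · rintro ⟨p, hp, rfl | rfl⟩
    · exact Or.inl ⟨p, hp, rfl⟩
    · exact Or.inr ⟨p, hp, rfl⟩

lemma endpoint_mem_cov {P : Finset (V × V)} {p : V × V} (hp : p ∈ P) :
    p.1 ∈ cov P ∧ p.2 ∈ cov P :=
  ⟨mem_cov.2 ⟨p, hp, Or.inl rfl⟩, mem_cov.2 ⟨p, hp, Or.inr rfl⟩⟩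

lemma card_cov {P : Finset (V × V)} (hP : IsPairing G P) : (cov P).card = 2 * P.card := by
  have h1 : (P.image Prod.fst).card = P.card := by
    apply Finset.card_image_of_injOn
    intro p hp q hq h
    by_contra hne
    exact ((hP.2 p hp q hq hne).1) h
  have h2 : (P.image Prod.snd).card = P.card := by
    apply Finset.card_image_of_injOn
    intro p hp q hq h
    by_contra hne
    exact ((hP.2 p hp q hq hne).2.2.2) h
  have hd : Disjoint (P.image Prod.fst) (P.image Prod.snd) := by
    rw [Finset.disjoint_left]
    rintro x hx hx'
    obtain ⟨p, hp, rfl⟩ := Finset.mem_image.1 hx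
    obtain ⟨q, hq, hq2⟩ := Finset.mem_image.1 hx'
    by_cases hpq : p = q
    · subst hpq; exact (hP.1 p hp).1 hq2.symm
    · exact (hP.2 p hp q hq hpq).2.1 hq2.symm
  rw [cov, Finset.card_union_of_disjoint hd, h1, h2]; ring

lemma isPairing_subset {P Q : Finset (V × V)} (hQP : Q ⊆ P) (hP : IsPairing G P) :
    IsPairing G Q :=
  ⟨fun p hp => hP.1 p (hQP hp), fun p hp q hq h => hP.2 p (hQP hp) q (hQP hq) h⟩

lemma isPairing_insert {Q : Finset (V × V)} {a b : V} (hQ : IsPairing G Q)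
    (hab : a ≠ b) (hnadj : ¬ G.Adj a b) (ha : a ∉ cov Q) (hb : b ∉ cov Q) :
    IsPairing G (insert (a, b) Q) ∧ cov (insert (a, b) Q) = insert a (insert b (cov Q)) ∧
      (insert (a, b) Q).card = Q.card + 1 := by
  have habQ : (a, b) ∉ Q := fun h => ha (mem_cov.2 ⟨(a, b), h, Or.inl rfl⟩)
  refine ⟨⟨?_, ?_⟩, ?_, Finset.card_insert_of_notMem habQ⟩
  · intro p hp
    rcases Finset.mem_insert.1 hp with rfl | hp
    · exact ⟨hab, hnadj⟩
    · exact hQ.1 p hp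
  · intro p hp q hq hpq
    rcases Finset.mem_insert.1 hp with rfl | hp <;> rcases Finset.mem_insert.1 hq with rfl | hq
    · exact absurd rfl hpq
    · refine ⟨fun h => ha (mem_cov.2 ⟨q, hq, Or.inl h⟩), fun h => ha (mem_cov.2 ⟨q, hq, Or.inr h⟩),
        fun h => hb (mem_cov.2 ⟨q, hq, Or.inl h⟩), fun h => hb (mem_cov.2 ⟨q, hq, Or.inr h⟩)⟩
    · refine ⟨fun h => ha (mem_cov.2 ⟨p, hp, Or.inl h.symm⟩), fun h => hb (mem_cov.2 ⟨p, hp, Or.inl h.symm⟩),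
        fun h => ha (mem_cov.2 ⟨p, hp, Or.inr h.symm⟩), fun h => hb (mem_cov.2 ⟨p, hp, Or.inr h.symm⟩)⟩
    · exact hQ.2 p hp q hq hpq
  · ext x
    simp only [mem_cov, Finset.mem_insert]
    constructor
    · rintro ⟨p, rfl | hp, hx⟩
      · rcases hx with rfl | rfl
        · exact Or.inl rfl
        · exact Or.inr (Or.inl rfl)
      · exact Or.inr (Or.inr ⟨p, hp, hx⟩)
    · rintro (h | h | ⟨p, hp, hx⟩)
      · exact ⟨(a, b), Or.inl rfl, Or.inl h⟩
      · exact ⟨(a, b), Or.inl rfl, Or.inr h⟩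
      · exact ⟨p, Or.inr hp, hx⟩

lemma cov_erase_subset {P : Finset (V × V)} {p : V × V} : cov (P.erase p) ⊆ cov P := by
  intro x hx
  obtain ⟨q, hq, h⟩ := mem_cov.1 hx
  exact mem_cov.2 ⟨q, Finset.mem_of_mem_erase hq, h⟩

lemma endpoint_not_mem_cov_erase {P : Finset (V × V)} (hP : IsPairing G P) {p : V × V}
    (hp : p ∈ P) : p.1 ∉ cov (P.erase p) ∧ p.2 ∉ cov (P.erase p) := by
  constructor <;> intro h <;> obtain ⟨q, hq, hx⟩ := mem_cov.1 h
  · have hqp : q ≠ p := Finset.ne_of_mem_erase hq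
    have := hP.2 p hp q (Finset.mem_of_mem_erase hq) (Ne.symm hqp)
    rcases hx with hx | hx
    · exact this.1 hx
    · exact this.2.1 hx
  · have hqp : q ≠ p := Finset.ne_of_mem_erase hq
    have := hP.2 p hp q (Finset.mem_of_mem_erase hq) (Ne.symm hqp)
    rcases hx with hx | hx
    · exact this.2.2.1 hx
    · exact this.2.2.2 hx

/-- A pairing of size `k` yields a proper coloring with `n - k` colors. -/
lemma pairing_chromatic {P : Finset (V × V)} [DecidableRel G.Adj] (hP : IsPairing G P) :
    G.chromaticNumber ≤ (Fintype.card V - P.card : ℕ) := by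
  classical
  set f : V → (V × V) ⊕ V := fun v =>
    if h : ∃ p ∈ P, v = p.1 ∨ v = p.2 then Sum.inl h.choose else Sum.inr v with hf
  have hval : ∀ u v, G.Adj u v → f u ≠ f v := by
    intro u v huv heq
    have hne : u ≠ v := huv.ne
    simp only [hf] at heq
    split_ifs at heq with h1 h2 h2
    · -- both inl
      have s1 := h1.choose_spec
      have s2 := h2.choose_spec
      rw [Sum.inl.injEq] at heq
      set p := h1.choose
      have s2' : p ∈ P ∧ (v = p.1 ∨ v = p.2) := by rw [heq]; exact s2
      rcases s1.2 with h1e | h1e <;> rcases s2'.2 with h2e | h2e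
      · exact hne (h1e.trans h2e.symm)
      · exact (hP.1 p s1.1).2 (h1e ▸ h2e ▸ huv)
      · exact (hP.1 p s1.1).2 (h2e ▸ h1e ▸ huv.symm)
      · exact hne (h1e.trans h2e.symm)
    · exact hne (Sum.inr.injEq _ _ ▸ heq)
  set T : Finset ((V × V) ⊕ V) := Finset.univ.image f with hT
  have hC : G.Coloring {x // x ∈ T} :=
    SimpleGraph.Coloring.mk (fun v => ⟨f v, Finset.mem_image_of_mem f (Finset.mem_univ v)⟩)
      (fun {u v} huv h => hval u v huv (by simpa using congrArg Subtype.val h))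
  have hcard : T.card ≤ Fintype.card V - P.card := by
    have hsub : T ⊆ P.image Sum.inl ∪ (Finset.univ \ cov P).image Sum.inr := by
      intro x hx
      obtain ⟨v, _, rfl⟩ := Finset.mem_image.1 hx
      simp only [hf]
      split_ifs with h
      · exact Finset.mem_union_left _ (Finset.mem_image_of_mem _ h.choose_spec.1)
      · refine Finset.mem_union_right _ (Finset.mem_image_of_mem _ ?_)
        simp only [Finset.mem_sdiff, Finset.mem_univ, true_and]
        intro hc
        obtain ⟨p, hp, hx⟩ := mem_cov.1 hc
        exact h ⟨p, hp, hx⟩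
    calc T.card ≤ (P.image Sum.inl).card + ((Finset.univ \ cov P).image Sum.inr).card := by
          exact le_trans (Finset.card_le_card hsub) (Finset.card_union_le _ _)
      _ ≤ P.card + (Fintype.card V - 2 * P.card) := by
          gcongr
          · exact Finset.card_image_le
          · calc ((Finset.univ \ cov P).image Sum.inr).card ≤ (Finset.univ \ cov P).card :=
                Finset.card_image_le
              _ = Fintype.card V - 2 * P.card := by
                rw [Finset.card_sdiff_of_subset (Finset.subset_univ _), card_cov hP, Finset.card_univ]
      _ ≤ Fintype.card V - P.card := by
          have : 2 * P.card ≤ Fintype.card V := by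
            rw [← card_cov hP]; exact Finset.card_le_card (Finset.subset_univ _)
          omega
  have : G.Colorable (Fintype.card {x // x ∈ T}) := hC.colorable
  rw [Fintype.card_coe] at this
  exact (this.mono hcard).chromaticNumber_le

end BK
section Walks

variable {V : Type*} [Fintype V] [DecidableEq V] {G : SimpleGraph V}

/-- A walk of length `k` from `a` to `b` in the complement graph, as a function. -/
def Reach (G : SimpleGraph V) (a b : V) (k : ℕ) : Prop :=
  ∃ c : ℕ → V, c 0 = a ∧ c k = b ∧ ∀ i < k, Hadj G (c i) (c (i + 1))

lemma reach_zero (a : V) : Reach G a a 0 := ⟨fun _ => a, rfl, rfl, by omega⟩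

lemma reach_one {a b : V} (h : Hadj G a b) : Reach G a b 1 := by
  refine ⟨fun i => if i = 0 then a else b, by simp, by simp, ?_⟩
  intro i hi
  have : i = 0 := by omega
  subst this; simpa using h

lemma reach_comp {a b d : V} {k m : ℕ} (h1 : Reach G a b k) (h2 : Reach G b d m) :
    Reach G a d (k + m) := by
  obtain ⟨c1, hc10, hc1k, hc1e⟩ := h1
  obtain ⟨c2, hc20, hc2m, hc2e⟩ := h2
  refine ⟨fun i => if i < k then c1 i else c2 (i - k), ?_, ?_, ?_⟩
  · show (if 0 < k then c1 0 else c2 (0 - k)) = a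
    split_ifs with h
    · exact hc10
    · have hk0 : k = 0 := by omega
      have hz : (0 : ℕ) - k = 0 := by omega
      rw [hz, hc20, ← hc1k, hk0, hc10]
  · show (if k + m < k then c1 (k + m) else c2 (k + m - k)) = d
    rw [if_neg (by omega)]
    have h : k + m - k = m := by omega
    rw [h, hc2m]
  · intro i hi
    show Hadj G (if i < k then c1 i else c2 (i - k))
      (if i + 1 < k then c1 (i + 1) else c2 (i + 1 - k))
    by_cases h1i : i + 1 < k
    · rw [if_pos (by omega), if_pos h1i]
      exact hc1e i (by omega)
    · by_cases h2i : i < k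
      · rw [if_pos h2i, if_neg h1i]
        have h2 : i + 1 - k = 0 := by omega
        have hik : i + 1 = k := by omega
        rw [h2, hc20, ← hc1k, ← hik]
        exact hc1e i (by omega)
      · rw [if_neg h2i, if_neg h1i]
        have e1 : i + 1 - k = (i - k) + 1 := by omega
        rw [e1]
        exact hc2e (i - k) (by omega)

lemma reach_rev {a b : V} {k : ℕ} (h : Reach G a b k) : Reach G b a k := by
  obtain ⟨c, hc0, hck, hce⟩ := h
  refine ⟨fun i => c (k - i), by simp [hck], by simp [hc0], ?_⟩
  intro i hi
  have e := hce (k - i - 1) (by omega)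
  have e1 : k - i - 1 + 1 = k - i := by omega
  rw [e1] at e
  have e2 : k - (i + 1) = k - i - 1 := by omega
  show Hadj G (c (k - i)) (c (k - (i + 1)))
  rw [e2]
  exact e.symm'

/-- Segment of a walk given by an explicit function. -/
lemma reach_seg {c : ℕ → V} {ℓ : ℕ} (hce : ∀ i < ℓ, Hadj G (c i) (c (i + 1)))
    {i j : ℕ} (hij : i ≤ j) (hjl : j ≤ ℓ) : Reach G (c i) (c j) (j - i) := by
  refine ⟨fun m => c (i + m), by simp, by show c (i + (j - i)) = c j; congr 1; omega, ?_⟩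
  intro m hm
  show Hadj G (c (i + m)) (c (i + (m + 1)))
  have h : i + (m + 1) = (i + m) + 1 := by omega
  rw [h]
  exact hce (i + m) (by omega)

end Walks
section NoOdd

variable {V : Type*} [Fintype V] [DecidableEq V] {G : SimpleGraph V}

instance hadjDec [DecidableRel G.Adj] : DecidableRel (Hadj G) :=
  fun a b => inferInstanceAs (Decidable (a ≠ b ∧ ¬ G.Adj a b))

lemma hadj_comm {a b : V} : Hadj G a b ↔ Hadj G b a :=
  ⟨fun h => h.symm', fun h => h.symm'⟩

lemma three_hits (h3 : Gᶜ.CliqueFree 3) {c : ℕ → V} {ℓ : ℕ}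
    (hcc : c ℓ = c 0) (hce : ∀ i < ℓ, Hadj G (c i) (c (i + 1)))
    (hmin : ∀ m, Odd m → m < ℓ → ∀ v, ¬ Reach G v v m) (hodd : Odd ℓ)
    {w : V} {i j k : ℕ} (hij : i < j) (hjk : j < k) (hkl : k < ℓ)
    (hwi : Hadj G w (c i)) (hwj : Hadj G w (c j)) (hwk : Hadj G w (c k)) : False := by
  have hg1 : 2 ≤ j - i := by
    by_contra h
    have : j = i + 1 := by omega
    subst this
    exact tri h3 hwi hwj (hce i (by omega))
  have hg2 : 2 ≤ k - j := by
    by_contra h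
    have : k = j + 1 := by omega
    subst this
    exact tri h3 hwj hwk (hce j (by omega))
  have hg3 : 2 ≤ ℓ - k + i := by
    by_contra h
    have hi0 : i = 0 := by omega
    have hkl1 : k + 1 = ℓ := by omega
    have he := hce k hkl
    rw [hkl1, hcc, ← hi0] at he
    exact tri h3 hwk hwi he
  rw [Nat.odd_iff] at hodd
  have hpar : (j - i) % 2 = 1 ∨ (k - j) % 2 = 1 ∨ (ℓ - k + i) % 2 = 1 := by omega
  rcases hpar with hp | hp | hp
  · have R : Reach G w w (1 + (j - i) + 1) :=
      reach_comp (reach_comp (reach_one hwi) (reach_seg hce (le_of_lt hij) (by omega)))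
        (reach_one hwj.symm')
    exact hmin _ (by rw [Nat.odd_iff]; omega) (by omega) w R
  · have R : Reach G w w (1 + (k - j) + 1) :=
      reach_comp (reach_comp (reach_one hwj) (reach_seg hce (le_of_lt hjk) (by omega)))
        (reach_one hwk.symm')
    exact hmin _ (by rw [Nat.odd_iff]; omega) (by omega) w R
  · have s1 : Reach G (c k) (c 0) (ℓ - k) := by
      have := reach_seg hce (le_of_lt hkl) (le_refl ℓ)
      rwa [hcc] at this
    have s2 : Reach G (c 0) (c i) (i - 0) := reach_seg hce (Nat.zero_le i) (by omega)
    have R : Reach G w w (1 + (ℓ - k) + (i - 0) + 1) :=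
      reach_comp (reach_comp (reach_comp (reach_one hwk) s1) s2) (reach_one hwi.symm')
    exact hmin _ (by rw [Nat.odd_iff]; omega) (by omega) w R

lemma no_odd_cw [DecidableRel G.Adj] (h3 : Gᶜ.CliqueFree 3) {δ : ℕ}
    (hd : ∀ v : V, δ ≤ (Finset.univ.filter (fun w => Hadj G v w)).card)
    (hbig : 2 * Fintype.card V < 5 * δ) :
    ∀ m, Odd m → ∀ v, ¬ Reach G v v m := by
  by_contra hcon
  push_neg at hcon
  obtain ⟨m₀, hm₀, v₀, hR₀⟩ := hcon
  classical
  have hex : ∃ m, Odd m ∧ ∃ v, Reach G v v m := ⟨m₀, hm₀, v₀, hR₀⟩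
  set ℓ := Nat.find hex with hℓdef
  obtain ⟨hodd, v, c, hc0, hcl, hce⟩ := Nat.find_spec hex
  have hmin : ∀ m, Odd m → m < ℓ → ∀ u, ¬ Reach G u u m := fun m ho hlt u hR =>
    Nat.find_min hex hlt ⟨ho, u, hR⟩
  have hcc : c ℓ = c 0 := by rw [hc0, hcl]
  have hne1 : ℓ ≠ 1 := by
    intro h1
    have := hce 0 (by omega)
    rw [show (0:ℕ)+1 = ℓ by omega, hcc] at this
    exact this.1 rfl
  have hne3 : ℓ ≠ 3 := by
    intro h3'
    have e0 := hce 0 (by omega)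
    have e1 := hce 1 (by omega)
    have e2 := hce 2 (by omega)
    rw [show (2:ℕ)+1 = ℓ by omega, hcc] at e2
    exact tri h3 e0 e2.symm' e1
  have hl5 : 5 ≤ ℓ := by
    have ho := hodd
    rw [Nat.odd_iff] at ho
    omega
  have key : ∀ w : V, ((Finset.range ℓ).filter (fun i => Hadj G w (c i))).card ≤ 2 := by
    intro w
    by_contra hcard
    push_neg at hcard
    obtain ⟨a, ha, b, hb, d, hd2, hab, had, hbd⟩ := Finset.two_lt_card.1 hcard
    simp only [Finset.mem_filter, Finset.mem_range] at ha hb hd2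
    have H : ∀ i j k, i < j → j < k → k < ℓ → Hadj G w (c i) → Hadj G w (c j) →
        Hadj G w (c k) → False :=
      fun i j k h1 h2 h3' wi wj wk => three_hits h3 hcc hce hmin hodd h1 h2 h3' wi wj wk
    have tot : a < b ∧ b < d ∨ a < d ∧ d < b ∨ b < a ∧ a < d ∨ b < d ∧ d < a ∨
        d < a ∧ a < b ∨ d < b ∧ b < a := by omega
    rcases tot with ⟨u1,u2⟩|⟨u1,u2⟩|⟨u1,u2⟩|⟨u1,u2⟩|⟨u1,u2⟩|⟨u1,u2⟩
    · exact H a b d u1 u2 hd2.1 ha.2 hb.2 hd2.2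
    · exact H a d b u1 u2 hb.1 ha.2 hd2.2 hb.2
    · exact H b a d u1 u2 hd2.1 hb.2 ha.2 hd2.2
    · exact H b d a u1 u2 ha.1 hb.2 hd2.2 ha.2
    · exact H d a b u1 u2 hb.1 hd2.2 ha.2 hb.2
    · exact H d b a u1 u2 ha.1 hd2.2 hb.2 ha.2
  have sum1 : ℓ * δ ≤ ∑ i ∈ Finset.range ℓ, (Finset.univ.filter (fun w => Hadj G (c i) w)).card := by
    calc ℓ * δ = ∑ _i ∈ Finset.range ℓ, δ := by
          rw [Finset.sum_const, Finset.card_range, smul_eq_mul]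
      _ ≤ _ := Finset.sum_le_sum (fun i _ => hd (c i))
  have swap : ∑ i ∈ Finset.range ℓ, (Finset.univ.filter (fun w => Hadj G (c i) w)).card
      = ∑ w : V, ((Finset.range ℓ).filter (fun i => Hadj G w (c i))).card := by
    simp_rw [Finset.card_filter]
    rw [Finset.sum_comm]
    refine Finset.sum_congr rfl fun w _ => Finset.sum_congr rfl fun i _ => ?_
    exact if_congr hadj_comm rfl rfl
  have sum2 : ∑ w : V, ((Finset.range ℓ).filter (fun i => Hadj G w (c i))).card
      ≤ 2 * Fintype.card V := by
    calc ∑ w : V, ((Finset.range ℓ).filter (fun i => Hadj G w (c i))).card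
        ≤ ∑ _w : V, 2 := Finset.sum_le_sum (fun w _ => key w)
      _ = 2 * Fintype.card V := by
          rw [Finset.sum_const, Finset.card_univ, smul_eq_mul]; ring
  have hmul : 5 * δ ≤ ℓ * δ := Nat.mul_le_mul_right δ hl5
  omega

end NoOdd
section Half

variable {V : Type*} [Fintype V] [DecidableEq V] {G : SimpleGraph V}

lemma conn [DecidableRel G.Adj] (h3 : Gᶜ.CliqueFree 3) {δ : ℕ}
    (hd : ∀ v : V, δ ≤ (Finset.univ.filter (fun w => Hadj G v w)).card)
    (hδn : Fintype.card V ≤ 2 * δ + 3) (hδ7 : 7 ≤ δ) (u v : V) :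
    ∃ κ ≤ 3, Reach G u v κ := by
  by_cases huv : u = v
  · exact ⟨0, by omega, huv ▸ reach_zero u⟩
  by_cases hH : Hadj G u v
  · exact ⟨1, by omega, reach_one hH⟩
  set Nu := Finset.univ.filter (fun w => Hadj G u w) with hNu
  set Nv := Finset.univ.filter (fun w => Hadj G v w) with hNv
  have hdu : δ ≤ Nu.card := hd u
  have hdv : δ ≤ Nv.card := hd v
  by_cases hint : (Nu ∩ Nv).Nonempty
  · obtain ⟨x, hx⟩ := hint
    rw [Finset.mem_inter, hNu, hNv, Finset.mem_filter, Finset.mem_filter] at hx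
    exact ⟨2, by omega, reach_comp (reach_one hx.1.2) (reach_one hx.2.2.symm')⟩
  · have hNuNe : Nu.Nonempty := Finset.card_pos.1 (by omega)
    obtain ⟨a, ha⟩ := hNuNe
    rw [hNu, Finset.mem_filter] at ha
    set Na := Finset.univ.filter (fun w => Hadj G a w) with hNa
    have hda : δ ≤ Na.card := hd a
    have hdisjNaNu : Disjoint Na Nu := by
      rw [Finset.disjoint_left]
      intro x hxa hxu
      rw [hNa, Finset.mem_filter] at hxa
      rw [hNu, Finset.mem_filter] at hxu
      exact tri h3 ha.2 hxu.2 hxa.2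
    have hNav : (Na ∩ Nv).Nonempty := by
      by_contra hne
      rw [Finset.not_nonempty_iff_eq_empty] at hne
      have hNvsub : Nv ⊆ Finset.univ \ (Nu ∪ Na) := by
        intro x hx
        rw [Finset.mem_sdiff, Finset.mem_union]
        refine ⟨Finset.mem_univ x, ?_⟩
        rintro (hx1 | hx2)
        · rw [Finset.not_nonempty_iff_eq_empty] at hint
          have : x ∈ Nu ∩ Nv := Finset.mem_inter.2 ⟨hx1, hx⟩
          rw [hint] at this
          exact absurd this (Finset.notMem_empty x)
        · have : x ∈ Na ∩ Nv := Finset.mem_inter.2 ⟨hx2, hx⟩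
          rw [hne] at this
          exact absurd this (Finset.notMem_empty x)
      have h1 : Nv.card ≤ Fintype.card V - (Nu.card + Na.card) := by
        have := Finset.card_le_card hNvsub
        rwa [Finset.card_sdiff_of_subset (Finset.subset_univ _), Finset.card_univ,
          Finset.card_union_of_disjoint hdisjNaNu.symm] at this
      omega
    obtain ⟨b, hb⟩ := hNav
    rw [Finset.mem_inter, hNa, hNv, Finset.mem_filter, Finset.mem_filter] at hb
    exact ⟨3, le_refl 3,
      reach_comp (reach_comp (reach_one ha.2) (reach_one hb.1.2)) (reach_one hb.2.2.symm')⟩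

lemma halfclique [DecidableRel G.Adj] (h3 : Gᶜ.CliqueFree 3) {δ : ℕ}
    (hd : ∀ v : V, δ ≤ (Finset.univ.filter (fun w => Hadj G v w)).card)
    (hbig : 2 * Fintype.card V < 5 * δ)
    (hδn : Fintype.card V ≤ 2 * δ + 3) (hδ7 : 7 ≤ δ) :
    ∃ s : Finset V, (∀ x ∈ s, ∀ y ∈ s, x ≠ y → G.Adj x y) ∧
      Fintype.card V ≤ 2 * s.card := by
  classical
  by_cases hV : Fintype.card V = 0
  · exact ⟨∅, by simp, by omega⟩
  have : Nonempty V := Fintype.card_pos_iff.1 (by omega)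
  obtain ⟨u₀⟩ := this
  have hNO := no_odd_cw h3 hd hbig
  set Ev := Finset.univ.filter (fun v => ∃ m, Even m ∧ Reach G u₀ v m) with hEv
  set Od := Finset.univ \ Ev with hOd
  have hindepE : ∀ x ∈ Ev, ∀ y ∈ Ev, x ≠ y → G.Adj x y := by
    intro x hx y hy hxy
    by_contra hnadj
    rw [hEv, Finset.mem_filter] at hx hy
    obtain ⟨m, hm, hRx⟩ := hx.2
    obtain ⟨m', hm', hRy⟩ := hy.2
    have R : Reach G u₀ u₀ (m + 1 + m') :=
      reach_comp (reach_comp hRx (reach_one ⟨hxy, hnadj⟩)) (reach_rev hRy)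
    refine hNO (m + 1 + m') ?_ u₀ R
    rcases hm with ⟨p, hp⟩; rcases hm' with ⟨q, hq⟩
    rw [Nat.odd_iff]; omega
  have hindepO : ∀ x ∈ Od, ∀ y ∈ Od, x ≠ y → G.Adj x y := by
    intro x hx y hy hxy
    by_contra hnadj
    rw [hOd, Finset.mem_sdiff, hEv, Finset.mem_filter] at hx hy
    obtain ⟨κ, hκ3, hRx⟩ := conn h3 hd hδn hδ7 u₀ x
    obtain ⟨κ', hκ3', hRy⟩ := conn h3 hd hδn hδ7 u₀ y
    have hκodd : ¬ Even κ := fun he => hx.2 ⟨Finset.mem_univ x, κ, he, hRx⟩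
    have hκodd' : ¬ Even κ' := fun he => hy.2 ⟨Finset.mem_univ y, κ', he, hRy⟩
    have R : Reach G u₀ u₀ (κ + 1 + κ') :=
      reach_comp (reach_comp hRx (reach_one ⟨hxy, hnadj⟩)) (reach_rev hRy)
    refine hNO (κ + 1 + κ') ?_ u₀ R
    rw [Nat.even_iff] at hκodd hκodd'
    rw [Nat.odd_iff]; omega
  have hcards : Ev.card + Od.card = Fintype.card V := by
    rw [hOd, Finset.card_sdiff_of_subset (Finset.subset_univ _), Finset.card_univ]
    have : Ev.card ≤ Fintype.card V := by
      rw [← Finset.card_univ]; exact Finset.card_le_card (Finset.subset_univ _)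
    omega
  by_cases hwhich : Ev.card ≤ Od.card
  · exact ⟨Od, hindepO, by omega⟩
  · exact ⟨Ev, hindepE, by omega⟩

end Half
section PairingStruct

variable {V : Type*} [Fintype V] [DecidableEq V] (G : SimpleGraph V) [DecidableRel G.Adj]

/-- Uncovered vertices. -/
def Uset (P : Finset (V × V)) : Finset V := Finset.univ \ cov P

/-- Uncovered non-neighbors of `x`. -/
def Sset (P : Finset (V × V)) (x : V) : Finset V :=
  (Uset P).filter (fun u => ¬ G.Adj x u)

/-- The endpoint of `p` having no uncovered non-neighbors. -/
def ypt (P : Finset (V × V)) (p : V × V) : V :=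
  if Sset G P p.2 = ∅ then p.2 else p.1

/-- The other endpoint. -/
def xpt (P : Finset (V × V)) (p : V × V) : V :=
  if Sset G P p.2 = ∅ then p.1 else p.2

variable {G} {P : Finset (V × V)}

lemma mem_Uset {u : V} : u ∈ Uset P ↔ u ∉ cov P := by
  simp [Uset]

lemma mem_Sset {x u : V} : u ∈ Sset G P x ↔ u ∉ cov P ∧ ¬ G.Adj x u := by
  simp [Sset, Uset]

lemma ne_of_USet_cov {u x : V} (hu : u ∈ Uset P) (hx : x ∈ cov P) : u ≠ x := by
  intro h; rw [mem_Uset] at hu; exact hu (h ▸ hx)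

lemma uclique (hP : IsPairing G P) (hmax : ∀ Q, IsPairing G Q → Q.card ≤ P.card)
    {u u' : V} (hu : u ∈ Uset P) (hu' : u' ∈ Uset P) (hne : u ≠ u') : G.Adj u u' := by
  by_contra hnadj
  rw [mem_Uset] at hu hu'
  obtain ⟨hQ, -, hcard⟩ := isPairing_insert hP hne hnadj hu hu'
  have := hmax _ hQ
  omega

/-- At most one endpoint of a pair has uncovered non-neighbors. -/
lemma ends_lemma (h3 : Gᶜ.CliqueFree 3) (hP : IsPairing G P)
    (hmax : ∀ Q, IsPairing G Q → Q.card ≤ P.card) {p : V × V} (hp : p ∈ P) :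
    ¬ ((Sset G P p.1).Nonempty ∧ (Sset G P p.2).Nonempty) := by
  rintro ⟨⟨u, hu⟩, ⟨u', hu'⟩⟩
  rw [mem_Sset] at hu hu'
  have hends := endpoint_mem_cov hp
  have hne1 : u ≠ p.1 := ne_of_USet_cov (mem_Uset.2 hu.1) hends.1
  have hne2 : u ≠ p.2 := ne_of_USet_cov (mem_Uset.2 hu.1) hends.2
  have hne1' : u' ≠ p.1 := ne_of_USet_cov (mem_Uset.2 hu'.1) hends.1
  have hne2' : u' ≠ p.2 := ne_of_USet_cov (mem_Uset.2 hu'.1) hends.2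
  by_cases huu : u = u'
  · subst huu
    exact tri h3 ⟨(hP.1 p hp).1, (hP.1 p hp).2⟩ ⟨hne1.symm, hu.2⟩ ⟨hne2.symm, hu'.2⟩
  · -- augment along the length-3 path u - p.1 - p.2 - u'
    have hE := isPairing_subset (Finset.erase_subset p P) hP
    have hpe := endpoint_not_mem_cov_erase hP hp
    have hu'cov : u' ∉ cov (P.erase p) := fun h =>
      (mem_Uset.1 (mem_Uset.2 hu'.1)) (cov_erase_subset h)
    have hucov : u ∉ cov (P.erase p) := fun h =>
      (mem_Uset.1 (mem_Uset.2 hu.1)) (cov_erase_subset h)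
    obtain ⟨hQ1, hcov1, hcard1⟩ := isPairing_insert hE hne2'.symm
      hu'.2 hpe.2 hu'cov
    have hu1 : u ∉ cov (insert (p.2, u') (P.erase p)) := by
      rw [hcov1]
      simp only [Finset.mem_insert]
      push_neg
      exact ⟨hne2, huu, hucov⟩
    have hp1 : p.1 ∉ cov (insert (p.2, u') (P.erase p)) := by
      rw [hcov1]
      simp only [Finset.mem_insert]
      push_neg
      exact ⟨(hP.1 p hp).1, hne1'.symm, hpe.1⟩
    obtain ⟨hQ2, -, hcard2⟩ := isPairing_insert hQ1 hne1
      (fun h => hu.2 h.symm) hu1 hp1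
    have := hmax _ hQ2
    rw [hcard1, Finset.card_erase_of_mem hp] at hcard2
    have hPpos : 1 ≤ P.card := Finset.card_pos.2 ⟨p, hp⟩
    omega

lemma S_ypt_empty (h3 : Gᶜ.CliqueFree 3) (hP : IsPairing G P)
    (hmax : ∀ Q, IsPairing G Q → Q.card ≤ P.card) {p : V × V} (hp : p ∈ P) :
    Sset G P (ypt G P p) = ∅ := by
  rw [ypt]
  split_ifs with h
  · exact h
  · have := ends_lemma h3 hP hmax hp
    rw [Finset.nonempty_iff_ne_empty, Finset.nonempty_iff_ne_empty] at this
    push_neg at this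
    by_contra h1
    exact h (this (Finset.nonempty_iff_ne_empty.2 h1))

lemma xypt_cases (p : V × V) :
    (xpt G P p = p.1 ∧ ypt G P p = p.2) ∨ (xpt G P p = p.2 ∧ ypt G P p = p.1) := by
  rw [xpt, ypt]
  split_ifs <;> simp

lemma adj_of_S_empty {x : V} (h : Sset G P x = ∅) {u : V} (hu : u ∈ Uset P) :
    G.Adj x u := by
  by_contra hn
  have : u ∈ Sset G P x := by rw [mem_Sset]; exact ⟨mem_Uset.1 hu, hn⟩
  rw [h] at this
  exact absurd this (Finset.notMem_empty u)

/-- endpoints of distinct pairs are distinct -/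
lemma ends_ne (hP : IsPairing G P) {p q : V × V} (hp : p ∈ P) (hq : q ∈ P) (hpq : p ≠ q)
    {z w : V} (hz : z = p.1 ∨ z = p.2) (hw : w = q.1 ∨ w = q.2) : z ≠ w := by
  have h := hP.2 p hp q hq hpq
  rcases hz with rfl | rfl <;> rcases hw with rfl | rfl
  · exact h.1
  · exact h.2.1
  · exact h.2.2.1
  · exact h.2.2.2

lemma xpt_mem_ends (p : V × V) : xpt G P p = p.1 ∨ xpt G P p = p.2 := by
  rcases xypt_cases (G := G) (P := P) p with ⟨h, -⟩ | ⟨h, -⟩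
  · exact Or.inl h
  · exact Or.inr h

lemma ypt_mem_ends (p : V × V) : ypt G P p = p.1 ∨ ypt G P p = p.2 := by
  rcases xypt_cases (G := G) (P := P) p with ⟨-, h⟩ | ⟨-, h⟩
  · exact Or.inr h
  · exact Or.inl h

lemma xpt_ne_ypt (hP : IsPairing G P) {p : V × V} (hp : p ∈ P) :
    xpt G P p ≠ ypt G P p := by
  rcases xypt_cases (G := G) (P := P) p with ⟨h1, h2⟩ | ⟨h1, h2⟩ <;> rw [h1, h2]
  · exact (hP.1 p hp).1
  · exact (hP.1 p hp).1.symm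

lemma xpt_mem_cov {p : V × V} (hp : p ∈ P) : xpt G P p ∈ cov P := by
  rcases xpt_mem_ends (G := G) (P := P) p with h | h <;> rw [h]
  · exact (endpoint_mem_cov hp).1
  · exact (endpoint_mem_cov hp).2

lemma ypt_mem_cov {p : V × V} (hp : p ∈ P) : ypt G P p ∈ cov P := by
  rcases ypt_mem_ends (G := G) (P := P) p with h | h <;> rw [h]
  · exact (endpoint_mem_cov hp).1
  · exact (endpoint_mem_cov hp).2

/-- The H-neighborhood cardinality. -/
lemma card_hnbr (v : V) :
    (Finset.univ.filter (fun w => Hadj G v w)).card = Fintype.card V - 1 - G.degree v := by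
  have he : Finset.univ.filter (fun w => Hadj G v w)
      = Finset.univ \ insert v (G.neighborFinset v) := by
    ext w
    simp only [Finset.mem_filter, Finset.mem_univ, true_and, Finset.mem_sdiff,
      Finset.mem_insert, SimpleGraph.mem_neighborFinset]
    simp only [Hadj]
    constructor
    · rintro ⟨h1, h2⟩
      exact fun h => h.elim (fun h' => h1 h'.symm) h2
    · intro h
      push_neg at h
      exact ⟨fun h' => h.1 h'.symm, h.2⟩
  rw [he, Finset.card_sdiff_of_subset (Finset.subset_univ _), Finset.card_univ,
    Finset.card_insert_of_notMem
      (fun h => G.irrefl ((SimpleGraph.mem_neighborFinset G v v).1 h)),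
    SimpleGraph.card_neighborFinset_eq_degree]
  omega

/-- Each uncovered vertex misses at most one pair. -/
lemma misses_le (h3 : Gᶜ.CliqueFree 3) (hP : IsPairing G P)
    (hmax : ∀ Q, IsPairing G Q → Q.card ≤ P.card)
    (hPn : P.card + G.maxDegree ≤ Fintype.card V) {u : V} (hu : u ∈ Uset P) :
    (P.filter (fun p => u ∉ Sset G P (xpt G P p))).card ≤ 1 := by
  classical
  set Hnb := Finset.univ.filter (fun w => Hadj G u w) with hHnb
  set Hit := P.filter (fun p => u ∈ Sset G P (xpt G P p)) with hHit
  set f : V → V × V := fun w => if h : ∃ p ∈ P, w = p.1 ∨ w = p.2 then h.choose else (w, w)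
    with hf
  have hmaps : ∀ w ∈ Hnb, f w ∈ Hit := by
    intro w hw
    rw [hHnb, Finset.mem_filter] at hw
    have hwH : Hadj G u w := hw.2
    have hwcov : w ∈ cov P := by
      by_contra hwc
      exact hwH.2 (uclique hP hmax hu (mem_Uset.2 hwc) hwH.1)
    have hex : ∃ p ∈ P, w = p.1 ∨ w = p.2 := mem_cov.1 hwcov
    have hfw : f w = hex.choose := by rw [hf]; exact dif_pos hex
    obtain ⟨hpP, hpe⟩ := hex.choose_spec
    set p := hex.choose
    have huS : u ∈ Sset G P w := by
      rw [mem_Sset]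
      exact ⟨mem_Uset.1 hu, fun h => hwH.2 h.symm⟩
    have hwypt : w ≠ ypt G P p := by
      intro h
      rw [h, S_ypt_empty h3 hP hmax hpP] at huS
      exact absurd huS (Finset.notMem_empty u)
    have hwx : w = xpt G P p := by
      rcases xypt_cases (G := G) (P := P) p with ⟨h1, h2⟩ | ⟨h1, h2⟩ <;>
        rcases hpe with h | h
      · exact h.trans h1.symm
      · exact absurd (h.trans h2.symm) hwypt
      · exact absurd (h.trans h2.symm) hwypt
      · exact h.trans h1.symm
    rw [hHit, Finset.mem_filter, hfw]
    exact ⟨hpP, hwx ▸ huS⟩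
  have hinj : Set.InjOn f Hnb := by
    intro w hw w' hw' heq
    have hw2 : Hadj G u w := by
      have h := hw; rw [hHnb] at h; simpa using h
    have hw2' : Hadj G u w' := by
      have h := hw'; rw [hHnb] at h; simpa using h
    by_contra hne
    have hwcov : w ∈ cov P := by
      by_contra hwc
      exact hw2.2 (uclique hP hmax hu (mem_Uset.2 hwc) hw2.1)
    have hwcov' : w' ∈ cov P := by
      by_contra hwc
      exact hw2'.2 (uclique hP hmax hu (mem_Uset.2 hwc) hw2'.1)
    have hex : ∃ p ∈ P, w = p.1 ∨ w = p.2 := mem_cov.1 hwcov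
    have hex' : ∃ p ∈ P, w' = p.1 ∨ w' = p.2 := mem_cov.1 hwcov'
    have hfw : f w = hex.choose := by rw [hf]; exact dif_pos hex
    have hfw' : f w' = hex'.choose := by rw [hf]; exact dif_pos hex'
    obtain ⟨hpP, hpe⟩ := hex.choose_spec
    obtain ⟨hpP', hpe'⟩ := hex'.choose_spec
    rw [hfw, hfw'] at heq
    rw [heq] at hpe
    -- w and w' are the two ends of the same pair
    have hHww' : Hadj G w w' := by
      have hpair : Hadj G hex'.choose.1 hex'.choose.2 :=
        ⟨(hP.1 _ hpP').1, (hP.1 _ hpP').2⟩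
      rcases hpe with h | h <;> rcases hpe' with h' | h'
      · exact absurd (h.trans h'.symm) hne
      · have hp2 := hpair; rw [← h, ← h'] at hp2; exact hp2
      · have hp2 := hpair.symm'; rw [← h, ← h'] at hp2; exact hp2
      · exact absurd (h.trans h'.symm) hne
    exact tri h3 hw2 hw2' hHww'
  have hcardle : Hnb.card ≤ Hit.card := Finset.card_le_card_of_injOn f hmaps hinj
  have hcardHnb : Hnb.card = Fintype.card V - 1 - G.degree u := card_hnbr u
  have hsplit : Hit.card + (P.filter (fun p => u ∉ Sset G P (xpt G P p))).card = P.card := by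
    rw [hHit]
    exact Finset.card_filter_add_card_filter_not _
  have hdeg : G.degree u ≤ G.maxDegree := G.degree_le_maxDegree u
  have hdeg2 : G.degree u < Fintype.card V := G.degree_lt_card_verts u
  omega

end PairingStruct
section Aug

variable {V : Type*} [Fintype V] [DecidableEq V] {G : SimpleGraph V} [DecidableRel G.Adj]
variable {P : Finset (V × V)}

lemma aug5 (hP : IsPairing G P) (hmax : ∀ Q, IsPairing G Q → Q.card ≤ P.card)
    {p q : V × V} (hp : p ∈ P) (hq : q ∈ P) (hpq : p ≠ q)
    {u u' : V} (hu : u ∈ Sset G P (xpt G P p)) (hu' : u' ∈ Sset G P (xpt G P q))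
    (huu' : u ≠ u') (hyy : ¬ G.Adj (ypt G P p) (ypt G P q)) : False := by
  rw [mem_Sset] at hu hu'
  have hxpE := xpt_mem_ends (G := G) (P := P) p
  have hypE := ypt_mem_ends (G := G) (P := P) p
  have hxqE := xpt_mem_ends (G := G) (P := P) q
  have hyqE := ypt_mem_ends (G := G) (P := P) q
  have hxpyp : xpt G P p ≠ ypt G P p := xpt_ne_ypt hP hp
  have hxqyq : xpt G P q ≠ ypt G P q := xpt_ne_ypt hP hq
  have hxpxq : xpt G P p ≠ xpt G P q := ends_ne hP hp hq hpq hxpE hxqE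
  have hxpyq : xpt G P p ≠ ypt G P q := ends_ne hP hp hq hpq hxpE hyqE
  have hypxq : ypt G P p ≠ xpt G P q := ends_ne hP hp hq hpq hypE hxqE
  have hypyq : ypt G P p ≠ ypt G P q := ends_ne hP hp hq hpq hypE hyqE
  have hxpc : xpt G P p ∈ cov P := xpt_mem_cov hp
  have hypc : ypt G P p ∈ cov P := ypt_mem_cov hp
  have hxqc : xpt G P q ∈ cov P := xpt_mem_cov hq
  have hyqc : ypt G P q ∈ cov P := ypt_mem_cov hq
  have huxp : u ≠ xpt G P p := ne_of_USet_cov (mem_Uset.2 hu.1) hxpc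
  have huyp : u ≠ ypt G P p := ne_of_USet_cov (mem_Uset.2 hu.1) hypc
  have huxq : u ≠ xpt G P q := ne_of_USet_cov (mem_Uset.2 hu.1) hxqc
  have huyq : u ≠ ypt G P q := ne_of_USet_cov (mem_Uset.2 hu.1) hyqc
  have hu'xq : u' ≠ xpt G P q := ne_of_USet_cov (mem_Uset.2 hu'.1) hxqc
  have hu'xp : u' ≠ xpt G P p := ne_of_USet_cov (mem_Uset.2 hu'.1) hxpc
  have hu'yp : u' ≠ ypt G P p := ne_of_USet_cov (mem_Uset.2 hu'.1) hypc
  have hu'yq : u' ≠ ypt G P q := ne_of_USet_cov (mem_Uset.2 hu'.1) hyqc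
  have hqe : q ∈ P.erase p := Finset.mem_erase.2 ⟨Ne.symm hpq, hq⟩
  have hE1 : IsPairing G (P.erase p) := isPairing_subset (Finset.erase_subset p P) hP
  have hE2 : IsPairing G ((P.erase p).erase q) :=
    isPairing_subset (Finset.erase_subset q _) hE1
  have hsub2 : cov ((P.erase p).erase q) ⊆ cov (P.erase p) := cov_erase_subset
  have hsub1 : cov (P.erase p) ⊆ cov P := cov_erase_subset
  have hpne := endpoint_not_mem_cov_erase hP hp
  have hqne := endpoint_not_mem_cov_erase hE1 hqe
  have hxpn : xpt G P p ∉ cov ((P.erase p).erase q) := fun hc => by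
    rcases hxpE with h | h
    · exact hpne.1 (h ▸ hsub2 hc)
    · exact hpne.2 (h ▸ hsub2 hc)
  have hypn : ypt G P p ∉ cov ((P.erase p).erase q) := fun hc => by
    rcases hypE with h | h
    · exact hpne.1 (h ▸ hsub2 hc)
    · exact hpne.2 (h ▸ hsub2 hc)
  have hxqn : xpt G P q ∉ cov ((P.erase p).erase q) := fun hc => by
    rcases hxqE with h | h
    · exact hqne.1 (h ▸ hc)
    · exact hqne.2 (h ▸ hc)
  have hyqn : ypt G P q ∉ cov ((P.erase p).erase q) := fun hc => by
    rcases hyqE with h | h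
    · exact hqne.1 (h ▸ hc)
    · exact hqne.2 (h ▸ hc)
  have hun : u ∉ cov ((P.erase p).erase q) := fun hc => hu.1 (hsub1 (hsub2 hc))
  have hu'n : u' ∉ cov ((P.erase p).erase q) := fun hc => hu'.1 (hsub1 (hsub2 hc))
  obtain ⟨hQ1, hcov1, hcard1⟩ := isPairing_insert hE2 hu'xq.symm hu'.2 hxqn hu'n
  obtain ⟨hQ2, hcov2, hcard2⟩ := isPairing_insert hQ1 hypyq hyy
    (by rw [hcov1]; simp only [Finset.mem_insert, not_or]; exact ⟨hypxq, hu'yp.symm, hypn⟩)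
    (by rw [hcov1]; simp only [Finset.mem_insert, not_or]; exact ⟨hxqyq.symm, hu'yq.symm, hyqn⟩)
  obtain ⟨hQ3, hcov3, hcard3⟩ := isPairing_insert hQ2 huxp (fun h => hu.2 h.symm)
    (by rw [hcov2, hcov1]; simp only [Finset.mem_insert, not_or]
        exact ⟨huyp, huyq, huxq, huu', hun⟩)
    (by rw [hcov2, hcov1]; simp only [Finset.mem_insert, not_or]
        exact ⟨hxpyp, hxpyq, hxpxq, hu'xp.symm, hxpn⟩)
  have hle := hmax _ hQ3
  rw [hcard2, hcard1, Finset.card_erase_of_mem hqe, Finset.card_erase_of_mem hp] at hcard3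
  have h1 : 1 ≤ P.card := Finset.card_pos.2 ⟨p, hp⟩
  have h2 : 2 ≤ P.card := by
    have : ({p, q} : Finset (V × V)) ⊆ P := by
      intro z hz; rcases Finset.mem_insert.1 hz with rfl | hz
      · exact hp
      · exact (Finset.mem_singleton.1 hz) ▸ hq
    have := Finset.card_le_card this
    rwa [Finset.card_pair hpq] at this
  omega

lemma aug9 (hP : IsPairing G P) (hmax : ∀ Q, IsPairing G Q → Q.card ≤ P.card)
    {q q' r : V × V} (hq : q ∈ P) (hq' : q' ∈ P) (hr : r ∈ P)
    (hqq' : q ≠ q') (hqr : q ≠ r) (hq'r : q' ≠ r)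
    {u u' : V} (hu : u ∈ Sset G P (xpt G P q)) (hu' : u' ∈ Sset G P (xpt G P q'))
    (huu' : u ≠ u') {z₁ z₂ : V}
    (hz : (z₁ = r.1 ∧ z₂ = r.2) ∨ (z₁ = r.2 ∧ z₂ = r.1))
    (h1 : ¬ G.Adj (ypt G P q) z₁) (h2 : ¬ G.Adj z₂ (ypt G P q')) : False := by
  rw [mem_Sset] at hu hu'
  have hz1E : z₁ = r.1 ∨ z₁ = r.2 := by tauto
  have hz2E : z₂ = r.1 ∨ z₂ = r.2 := by tauto
  have hz12 : z₁ ≠ z₂ := by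
    rcases hz with ⟨ha, hb⟩ | ⟨ha, hb⟩ <;> rw [ha, hb]
    · exact (hP.1 r hr).1
    · exact (hP.1 r hr).1.symm
  have hxqE := xpt_mem_ends (G := G) (P := P) q
  have hyqE := ypt_mem_ends (G := G) (P := P) q
  have hxq'E := xpt_mem_ends (G := G) (P := P) q'
  have hyq'E := ypt_mem_ends (G := G) (P := P) q'
  have hxy : xpt G P q ≠ ypt G P q := xpt_ne_ypt hP hq
  have hxy' : xpt G P q' ≠ ypt G P q' := xpt_ne_ypt hP hq'
  have hxx : xpt G P q ≠ xpt G P q' := ends_ne hP hq hq' hqq' hxqE hxq'E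
  have hxy2 : xpt G P q ≠ ypt G P q' := ends_ne hP hq hq' hqq' hxqE hyq'E
  have hyx : ypt G P q ≠ xpt G P q' := ends_ne hP hq hq' hqq' hyqE hxq'E
  have hyy2 : ypt G P q ≠ ypt G P q' := ends_ne hP hq hq' hqq' hyqE hyq'E
  have hxz1 : xpt G P q ≠ z₁ := ends_ne hP hq hr hqr hxqE hz1E
  have hxz2 : xpt G P q ≠ z₂ := ends_ne hP hq hr hqr hxqE hz2E
  have hyz1 : ypt G P q ≠ z₁ := ends_ne hP hq hr hqr hyqE hz1E
  have hyz2 : ypt G P q ≠ z₂ := ends_ne hP hq hr hqr hyqE hz2E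
  have hx'z1 : xpt G P q' ≠ z₁ := ends_ne hP hq' hr hq'r hxq'E hz1E
  have hx'z2 : xpt G P q' ≠ z₂ := ends_ne hP hq' hr hq'r hxq'E hz2E
  have hy'z1 : ypt G P q' ≠ z₁ := ends_ne hP hq' hr hq'r hyq'E hz1E
  have hy'z2 : ypt G P q' ≠ z₂ := ends_ne hP hq' hr hq'r hyq'E hz2E
  have hxqc : xpt G P q ∈ cov P := xpt_mem_cov hq
  have hyqc : ypt G P q ∈ cov P := ypt_mem_cov hq
  have hxq'c : xpt G P q' ∈ cov P := xpt_mem_cov hq'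
  have hyq'c : ypt G P q' ∈ cov P := ypt_mem_cov hq'
  have hz1c : z₁ ∈ cov P := by
    rcases hz1E with h | h <;> rw [h]
    · exact (endpoint_mem_cov hr).1
    · exact (endpoint_mem_cov hr).2
  have hz2c : z₂ ∈ cov P := by
    rcases hz2E with h | h <;> rw [h]
    · exact (endpoint_mem_cov hr).1
    · exact (endpoint_mem_cov hr).2
  have hUu : u ∈ Uset P := mem_Uset.2 hu.1
  have hUu' : u' ∈ Uset P := mem_Uset.2 hu'.1
  have huxq : u ≠ xpt G P q := ne_of_USet_cov hUu hxqc
  have huyq : u ≠ ypt G P q := ne_of_USet_cov hUu hyqc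
  have huxq' : u ≠ xpt G P q' := ne_of_USet_cov hUu hxq'c
  have huyq' : u ≠ ypt G P q' := ne_of_USet_cov hUu hyq'c
  have huz1 : u ≠ z₁ := ne_of_USet_cov hUu hz1c
  have huz2 : u ≠ z₂ := ne_of_USet_cov hUu hz2c
  have hu'xq : u' ≠ xpt G P q := ne_of_USet_cov hUu' hxqc
  have hu'yq : u' ≠ ypt G P q := ne_of_USet_cov hUu' hyqc
  have hu'xq' : u' ≠ xpt G P q' := ne_of_USet_cov hUu' hxq'c
  have hu'yq' : u' ≠ ypt G P q' := ne_of_USet_cov hUu' hyq'c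
  have hu'z1 : u' ≠ z₁ := ne_of_USet_cov hUu' hz1c
  have hu'z2 : u' ≠ z₂ := ne_of_USet_cov hUu' hz2c
  -- base set: erase q, q', r
  have hq'e : q' ∈ P.erase q := Finset.mem_erase.2 ⟨Ne.symm hqq', hq'⟩
  have hre : r ∈ (P.erase q).erase q' :=
    Finset.mem_erase.2 ⟨Ne.symm hq'r, Finset.mem_erase.2 ⟨Ne.symm hqr, hr⟩⟩
  have hE1 : IsPairing G (P.erase q) := isPairing_subset (Finset.erase_subset _ _) hP
  have hE2 : IsPairing G ((P.erase q).erase q') :=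
    isPairing_subset (Finset.erase_subset _ _) hE1
  have hE3 : IsPairing G (((P.erase q).erase q').erase r) :=
    isPairing_subset (Finset.erase_subset _ _) hE2
  have hsub3 : cov (((P.erase q).erase q').erase r) ⊆ cov ((P.erase q).erase q') :=
    cov_erase_subset
  have hsub2 : cov ((P.erase q).erase q') ⊆ cov (P.erase q) := cov_erase_subset
  have hsub1 : cov (P.erase q) ⊆ cov P := cov_erase_subset
  have hqne := endpoint_not_mem_cov_erase hP hq
  have hq'ne := endpoint_not_mem_cov_erase hE1 hq'e
  have hrne := endpoint_not_mem_cov_erase hE2 hre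
  set E3 := ((P.erase q).erase q').erase r with hE3def
  have hxqn : xpt G P q ∉ cov E3 := fun hc => by
    rcases hxqE with h | h
    · exact hqne.1 (h ▸ hsub2 (hsub3 hc))
    · exact hqne.2 (h ▸ hsub2 (hsub3 hc))
  have hyqn : ypt G P q ∉ cov E3 := fun hc => by
    rcases hyqE with h | h
    · exact hqne.1 (h ▸ hsub2 (hsub3 hc))
    · exact hqne.2 (h ▸ hsub2 (hsub3 hc))
  have hxq'n : xpt G P q' ∉ cov E3 := fun hc => by
    rcases hxq'E with h | h
    · exact hq'ne.1 (h ▸ hsub3 hc)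
    · exact hq'ne.2 (h ▸ hsub3 hc)
  have hyq'n : ypt G P q' ∉ cov E3 := fun hc => by
    rcases hyq'E with h | h
    · exact hq'ne.1 (h ▸ hsub3 hc)
    · exact hq'ne.2 (h ▸ hsub3 hc)
  have hz1n : z₁ ∉ cov E3 := fun hc => by
    rcases hz1E with h | h
    · exact hrne.1 (h ▸ hc)
    · exact hrne.2 (h ▸ hc)
  have hz2n : z₂ ∉ cov E3 := fun hc => by
    rcases hz2E with h | h
    · exact hrne.1 (h ▸ hc)
    · exact hrne.2 (h ▸ hc)
  have hun : u ∉ cov E3 := fun hc => hu.1 (hsub1 (hsub2 (hsub3 hc)))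
  have hu'n : u' ∉ cov E3 := fun hc => hu'.1 (hsub1 (hsub2 (hsub3 hc)))
  -- insert (xpt q', u')
  obtain ⟨hQ1, hcov1, hcard1⟩ := isPairing_insert hE3 hu'xq'.symm hu'.2 hxq'n hu'n
  -- insert (z₂, ypt q')
  obtain ⟨hQ2, hcov2, hcard2⟩ := isPairing_insert hQ1 hy'z2.symm h2
    (by rw [hcov1]; simp only [Finset.mem_insert, not_or]; exact ⟨hx'z2.symm, hu'z2.symm, hz2n⟩)
    (by rw [hcov1]; simp only [Finset.mem_insert, not_or]; exact ⟨hxy'.symm, hu'yq'.symm, hyq'n⟩)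
  -- insert (ypt q, z₁)
  obtain ⟨hQ3, hcov3, hcard3⟩ := isPairing_insert hQ2 hyz1 h1
    (by rw [hcov2, hcov1]; simp only [Finset.mem_insert, not_or]
        exact ⟨hyz2, hyy2, hyx, hu'yq.symm, hyqn⟩)
    (by rw [hcov2, hcov1]; simp only [Finset.mem_insert, not_or]
        exact ⟨hz12, hy'z1.symm, hx'z1.symm, hu'z1.symm, hz1n⟩)
  -- insert (u, xpt q)
  obtain ⟨hQ4, hcov4, hcard4⟩ := isPairing_insert hQ3 huxq (fun h => hu.2 h.symm)
    (by rw [hcov3, hcov2, hcov1]; simp only [Finset.mem_insert, not_or]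
        exact ⟨huyq, huz1, huz2, huyq', huxq', huu', hun⟩)
    (by rw [hcov3, hcov2, hcov1]; simp only [Finset.mem_insert, not_or]
        exact ⟨hxy, hxz1, hxz2, hxy2, hxx, hu'xq.symm, hxqn⟩)
  have hle := hmax _ hQ4
  have e3 : E3.card = P.card - 3 := by
    rw [hE3def, Finset.card_erase_of_mem hre, Finset.card_erase_of_mem hq'e,
      Finset.card_erase_of_mem hq]
    omega
  have h3c : 3 ≤ P.card := by
    have hsub : ({q, q', r} : Finset (V × V)) ⊆ P := by
      intro z hz
      rcases Finset.mem_insert.1 hz with rfl | hz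
      · exact hq
      rcases Finset.mem_insert.1 hz with rfl | hz
      · exact hq'
      · exact (Finset.mem_singleton.1 hz) ▸ hr
    have hcard : ({q, q', r} : Finset (V × V)).card = 3 := by
      rw [Finset.card_insert_of_notMem (by simp [hqq', hqr]),
        Finset.card_insert_of_notMem (by simp [hq'r]), Finset.card_singleton]
    have := Finset.card_le_card hsub
    omega
  omega

end Aug
section Core

variable {V : Type*} [Fintype V] [DecidableEq V] {G : SimpleGraph V} [DecidableRel G.Adj]
variable {P : Finset (V × V)}

lemma clique_card_le {s : Finset V} (hs : ∀ x ∈ s, ∀ y ∈ s, x ≠ y → G.Adj x y) :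
    s.card ≤ G.cliqueNum := by
  have hc : G.IsClique (↑s : Set V) := fun x hx y hy hxy => hs x hx y hy hxy
  exact SimpleGraph.IsClique.card_le_cliqueNum (tc := hc)

lemma core (h3 : Gᶜ.CliqueFree 3) (hP : IsPairing G P)
    (hmax : ∀ Q, IsPairing G Q → Q.card ≤ P.card) (hΔ9 : 9 ≤ G.maxDegree)
    (hPn : P.card + G.maxDegree ≤ Fintype.card V) :
    Fintype.card V - P.card ≤ G.cliqueNum := by
  classical
  have hcov2 : (cov P).card = 2 * P.card := card_cov hP
  have hUcard : (Uset P).card = Fintype.card V - 2 * P.card := by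
    rw [Uset, Finset.card_sdiff_of_subset (Finset.subset_univ _), Finset.card_univ, hcov2]
  have h2P : 2 * P.card ≤ Fintype.card V := by
    rw [← hcov2, ← Finset.card_univ]
    exact Finset.card_le_card (Finset.subset_univ _)
  by_cases hU2 : 2 ≤ (Uset P).card
  · -- at least two uncovered vertices
    obtain ⟨u₁, hu₁, u₂, hu₂, hu12⟩ := (Finset.one_lt_card (s := Uset P)).1 (by omega)
    by_cases hA : ∃ p ∈ P, Sset G P (xpt G P p) = ∅
    · -- one pair has no attachments at all
      obtain ⟨p₀, hp₀, hSx⟩ := hA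
      have hSy := S_ypt_empty h3 hP hmax hp₀
      have hS1 : Sset G P p₀.1 = ∅ ∧ Sset G P p₀.2 = ∅ := by
        rcases xypt_cases (G := G) (P := P) p₀ with ⟨h1, h2⟩ | ⟨h1, h2⟩
        · exact ⟨h1 ▸ hSx, h2 ▸ hSy⟩
        · exact ⟨h2 ▸ hSy, h1 ▸ hSx⟩
      have hSall : ∀ q ∈ P, q ≠ p₀ → ∀ u ∈ Uset P, u ∈ Sset G P (xpt G P q) := by
        intro q hq hqp u hu
        by_contra hnot
        have hmiss := misses_le h3 hP hmax hPn hu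
        have hsub : ({p₀, q} : Finset (V × V))
            ⊆ P.filter (fun p => u ∉ Sset G P (xpt G P p)) := by
          intro w hw
          rcases Finset.mem_insert.1 hw with rfl | hw
          · exact Finset.mem_filter.2 ⟨hp₀, by rw [hSx]; exact Finset.notMem_empty u⟩
          · rw [Finset.mem_singleton] at hw; subst hw
            exact Finset.mem_filter.2 ⟨hq, hnot⟩
        have hcc := Finset.card_le_card hsub
        rw [Finset.card_pair (fun h => hqp h.symm)] at hcc
        omega
      have hzex : ∃ z, (z = p₀.1 ∨ z = p₀.2) ∧
          ∀ q ∈ P.erase p₀, G.Adj z (ypt G P q) := by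
        by_contra hno
        push_neg at hno
        obtain ⟨q₁, hq₁, hnadj₁⟩ := hno p₀.1 (Or.inl rfl)
        obtain ⟨q₂, hq₂, hnadj₂⟩ := hno p₀.2 (Or.inr rfl)
        have hq₁P := Finset.mem_of_mem_erase hq₁
        have hq₁ne := Finset.ne_of_mem_erase hq₁
        have hq₂P := Finset.mem_of_mem_erase hq₂
        have hq₂ne := Finset.ne_of_mem_erase hq₂
        by_cases h12 : q₁ = q₂
        · subst h12
          exact tri h3 (x := p₀.1) (y := p₀.2) (z := ypt G P q₁)
            ⟨(hP.1 p₀ hp₀).1, (hP.1 p₀ hp₀).2⟩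
            ⟨ends_ne hP hp₀ hq₁P (fun h => hq₁ne h.symm) (Or.inl rfl)
              (ypt_mem_ends q₁), hnadj₁⟩
            ⟨ends_ne hP hp₀ hq₁P (fun h => hq₁ne h.symm) (Or.inr rfl)
              (ypt_mem_ends q₁), hnadj₂⟩
        · exact aug9 hP hmax hq₁P hq₂P hp₀ h12 hq₁ne hq₂ne
            (hSall q₁ hq₁P hq₁ne u₁ hu₁) (hSall q₂ hq₂P hq₂ne u₂ hu₂) hu12
            (Or.inl ⟨rfl, rfl⟩) (fun h => hnadj₁ h.symm) hnadj₂
      obtain ⟨z, hzE, hzadj⟩ := hzex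
      have hzS : Sset G P z = ∅ := by
        rcases hzE with h | h
        · rw [h]; exact hS1.1
        · rw [h]; exact hS1.2
      have hzc : z ∈ cov P := by
        rcases hzE with h | h <;> rw [h]
        · exact (endpoint_mem_cov hp₀).1
        · exact (endpoint_mem_cov hp₀).2
      set s := (Uset P ∪ (P.erase p₀).image (ypt G P)) ∪ {z} with hs
      have hclique : ∀ x ∈ s, ∀ y ∈ s, x ≠ y → G.Adj x y := by
        have hUz : ∀ u ∈ Uset P, G.Adj z u := fun u hu => adj_of_S_empty hzS hu
        have hUy : ∀ q ∈ P.erase p₀, ∀ u ∈ Uset P, G.Adj (ypt G P q) u := fun q hq u hu =>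
          adj_of_S_empty (S_ypt_empty h3 hP hmax (Finset.mem_of_mem_erase hq)) hu
        have hyyadj : ∀ q ∈ P.erase p₀, ∀ q' ∈ P.erase p₀,
            ypt G P q ≠ ypt G P q' → G.Adj (ypt G P q) (ypt G P q') := by
          intro q hq q' hq' hne
          by_contra hnadj
          have hqq' : q ≠ q' := fun h => hne (by rw [h])
          exact aug5 hP hmax (Finset.mem_of_mem_erase hq) (Finset.mem_of_mem_erase hq') hqq'
            (hSall q (Finset.mem_of_mem_erase hq) (Finset.ne_of_mem_erase hq) u₁ hu₁)
            (hSall q' (Finset.mem_of_mem_erase hq') (Finset.ne_of_mem_erase hq') u₂ hu₂)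
            hu12 hnadj
        intro x hx y hy hxy
        simp only [hs, Finset.mem_union, Finset.mem_singleton, Finset.mem_image] at hx hy
        rcases hx with (hxU | ⟨qx, hqx, rfl⟩) | rfl <;>
          rcases hy with (hyU | ⟨qy, hqy, rfl⟩) | rfl
        · exact uclique hP hmax hxU hyU hxy
        · exact (hUy qy hqy x hxU).symm
        · exact (hUz x hxU).symm
        · exact hUy qx hqx y hyU
        · exact hyyadj qx hqx qy hqy hxy
        · exact (hzadj qx hqx).symm
        · exact hUz y hyU
        · exact hzadj qy hqy
        · exact absurd rfl hxy
      have hyinj : Set.InjOn (ypt G P) (P.erase p₀) := by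
        intro p hp q hq heq
        by_contra hne
        exact ends_ne hP (Finset.mem_of_mem_erase hp) (Finset.mem_of_mem_erase hq) hne
          (ypt_mem_ends p) (ypt_mem_ends q) heq
      have himcard : ((P.erase p₀).image (ypt G P)).card = P.card - 1 := by
        rw [Finset.card_image_of_injOn hyinj, Finset.card_erase_of_mem hp₀]
      have hd1 : Disjoint (Uset P) ((P.erase p₀).image (ypt G P)) := by
        rw [Finset.disjoint_left]
        intro a ha hb
        obtain ⟨q, hq, rfl⟩ := Finset.mem_image.1 hb
        exact (mem_Uset.1 ha) (ypt_mem_cov (Finset.mem_of_mem_erase hq))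
      have hd2 : Disjoint (Uset P ∪ (P.erase p₀).image (ypt G P)) ({z} : Finset V) := by
        rw [Finset.disjoint_right]
        intro a ha hb
        rw [Finset.mem_singleton] at ha; subst ha
        rcases Finset.mem_union.1 hb with h | h
        · exact (mem_Uset.1 h) hzc
        · obtain ⟨q, hq, heq⟩ := Finset.mem_image.1 h
          exact ends_ne hP (Finset.mem_of_mem_erase hq) hp₀ (Finset.ne_of_mem_erase hq)
            (ypt_mem_ends q) hzE heq
      have hscard : s.card = (Fintype.card V - 2 * P.card) + (P.card - 1) + 1 := by
        rw [hs, Finset.card_union_of_disjoint hd2, Finset.card_union_of_disjoint hd1,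
          hUcard, himcard, Finset.card_singleton]
      have hPpos : 1 ≤ P.card := Finset.card_pos.2 ⟨p₀, hp₀⟩
      have hcl := clique_card_le hclique
      omega
    · -- every pair has attachments
      push_neg at hA
      set s := Uset P ∪ P.image (ypt G P) with hs
      have hclique : ∀ x ∈ s, ∀ y ∈ s, x ≠ y → G.Adj x y := by
        have hUy : ∀ q ∈ P, ∀ u ∈ Uset P, G.Adj (ypt G P q) u := fun q hq u hu =>
          adj_of_S_empty (S_ypt_empty h3 hP hmax hq) hu
        have hyyadj : ∀ q ∈ P, ∀ q' ∈ P,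
            ypt G P q ≠ ypt G P q' → G.Adj (ypt G P q) (ypt G P q') := by
          intro q hq q' hq' hne
          by_contra hnadj
          have hqq' : q ≠ q' := fun h => hne (by rw [h])
          obtain ⟨u, hu⟩ := (hA q hq)
          obtain ⟨u', hu'⟩ := (hA q' hq')
          by_cases huu' : u = u'
          · subst huu'
            obtain ⟨u₃, hu₃U, hu₃ne⟩ : ∃ u₃ ∈ Uset P, u₃ ≠ u := by
              by_cases h1 : u₁ = u
              · exact ⟨u₂, hu₂, fun h => hu12 (h1 ▸ h ▸ rfl)⟩
              · exact ⟨u₁, hu₁, h1⟩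
            by_cases h3p : u₃ ∈ Sset G P (xpt G P q)
            · exact aug5 hP hmax hq hq' hqq' h3p hu' hu₃ne hnadj
            · by_cases h3q : u₃ ∈ Sset G P (xpt G P q')
              · exact aug5 hP hmax hq hq' hqq' hu h3q (fun h => hu₃ne h.symm) hnadj
              · have hmiss := misses_le h3 hP hmax hPn hu₃U
                have hsub : ({q, q'} : Finset (V × V))
                    ⊆ P.filter (fun p => u₃ ∉ Sset G P (xpt G P p)) := by
                  intro w hw
                  rcases Finset.mem_insert.1 hw with rfl | hw
                  · exact Finset.mem_filter.2 ⟨hq, h3p⟩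
                  · rw [Finset.mem_singleton] at hw; subst hw
                    exact Finset.mem_filter.2 ⟨hq', h3q⟩
                have hcc := Finset.card_le_card hsub
                rw [Finset.card_pair hqq'] at hcc
                omega
          · exact aug5 hP hmax hq hq' hqq' hu hu' huu' hnadj
        intro x hx y hy hxy
        simp only [hs, Finset.mem_union, Finset.mem_image] at hx hy
        rcases hx with hxU | ⟨qx, hqx, rfl⟩ <;> rcases hy with hyU | ⟨qy, hqy, rfl⟩
        · exact uclique hP hmax hxU hyU hxy
        · exact (hUy qy hqy x hxU).symm
        · exact hUy qx hqx y hyU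
        · exact hyyadj qx hqx qy hqy hxy
      have hyinj : Set.InjOn (ypt G P) P := by
        intro p hp q hq heq
        by_contra hne
        exact ends_ne hP hp hq hne (ypt_mem_ends p) (ypt_mem_ends q) heq
      have hd1 : Disjoint (Uset P) (P.image (ypt G P)) := by
        rw [Finset.disjoint_left]
        intro a ha hb
        obtain ⟨q, hq, rfl⟩ := Finset.mem_image.1 hb
        exact (mem_Uset.1 ha) (ypt_mem_cov hq)
      have hscard : s.card = (Fintype.card V - 2 * P.card) + P.card := by
        rw [hs, Finset.card_union_of_disjoint hd1, hUcard, Finset.card_image_of_injOn hyinj]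
      have hcl := clique_card_le hclique
      omega
  · -- at most one uncovered vertex : complement is "bipartite-like"
    have hUle : (Uset P).card ≤ 1 := by omega
    have hU1 : Fintype.card V ≤ 2 * P.card + 1 := by omega
    have hd : ∀ v : V, (Fintype.card V - 1 - G.maxDegree)
        ≤ (Finset.univ.filter (fun w => Hadj G v w)).card := by
      intro v
      rw [card_hnbr v]
      have h1 := G.degree_le_maxDegree v
      omega
    have hbig : 2 * Fintype.card V < 5 * (Fintype.card V - 1 - G.maxDegree) := by omega
    have hδn : Fintype.card V ≤ 2 * (Fintype.card V - 1 - G.maxDegree) + 3 := by omega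
    have hδ7 : 7 ≤ Fintype.card V - 1 - G.maxDegree := by omega
    obtain ⟨s, hsA, hsC⟩ := halfclique h3 hd hbig hδn hδ7
    have hcl := clique_card_le hsA
    omega

end Core

/-- Borodin–Kostochka conjecture for `3K₁`-free graphs: if a finite simple graph `G`
is `3K₁`-free (i.e. its complement is triangle-free, equivalently `G` has no
independent set of three vertices) and its maximum degree is at least `9`, then
`χ(G) ≤ max {ω(G), Δ(G) - 1}`. -/
theorem stmt_2 {V : Type*} [Fintype V] (G : SimpleGraph V) [DecidableRel G.Adj]
    (h3K1 : Gᶜ.CliqueFree 3) (hΔ : 9 ≤ G.maxDegree) :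
    G.chromaticNumber ≤ (max G.cliqueNum (G.maxDegree - 1) : ℕ) := by
  classical
  obtain ⟨P, hPmem, hmax⟩ := Finset.exists_max_image
    ((Finset.univ : Finset (Finset (V × V))).filter (fun Q => IsPairing G Q))
    Finset.card ⟨∅, by simp [IsPairing]⟩
  rw [Finset.mem_filter] at hPmem
  have hP : IsPairing G P := hPmem.2
  have hmax' : ∀ Q, IsPairing G Q → Q.card ≤ P.card := fun Q hQ =>
    hmax Q (Finset.mem_filter.2 ⟨Finset.mem_univ Q, hQ⟩)
  have h2P : 2 * P.card ≤ Fintype.card V := by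
    rw [← card_cov hP, ← Finset.card_univ]
    exact Finset.card_le_card (Finset.subset_univ _)
  by_cases hle : (Fintype.card V - P.card : ℕ) ≤ max G.cliqueNum (G.maxDegree - 1)
  · exact le_trans (pairing_chromatic hP) (by exact_mod_cast hle)
  · exfalso
    push_neg at hle
    rw [max_lt_iff] at hle
    have hPn : P.card + G.maxDegree ≤ Fintype.card V := by
      have := hle.2
      omega
    have := core h3K1 hP hmax' hΔ hPn
    have := hle.1
    omega
end
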